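/- arXiv:1004.1263 — 4 statements merged into one kernel-verified Lean document; each statement's English description precedes it below -/
import Mathlib

section
/- Let β>2 and d>0. There exists a constant c=c(β,d)<∞ such that for every n≥1, every tuple f_1,…,f_n of probability generating functions satisfying the tail condition H(β,d), and every integer l with 1≤l≤⌈β⌉−1, the l-th factorial moment of the composition, F^{(l)}(1) = Σ_{j≥0} j(j−1)⋯(j−l+1) P_j, satisfies F^{(l)}(1) ≤ c · n^{l−1} · e^{S_n} · e^{(l−1)(S_n−M_n)}. -/
open Set Filter

noncomputable section

/-- Mean of a distribution `a` on ℕ. -/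
def pmfMean (a : ℕ → ℝ) : ℝ := ∑' k : ℕ, (k : ℝ) * a k

/-- Tail `q_k = ∑_{j > k} a_j` of a distribution `a` on ℕ. -/
def tailAt (a : ℕ → ℝ) (k : ℕ) : ℝ := ∑' j : ℕ, if k < j then a j else 0

/-- `a` is a probability distribution on ℕ with finite positive mean. -/
def IsOffspring (a : ℕ → ℝ) : Prop :=
  (∀ k, 0 ≤ a k) ∧ HasSum a 1 ∧ Summable (fun k : ℕ => (k : ℝ) * a k) ∧ 0 < pmfMean a

/-- Tail condition `H(β,d)`: `q_k ≤ d·q_0·min(m,1)·k^{-β}` for all `k ≥ 1`. -/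
def TailCond (β d : ℝ) (a : ℕ → ℝ) : Prop :=
  ∀ k : ℕ, 1 ≤ k → tailAt a k ≤ d * tailAt a 0 * min (pmfMean a) 1 * (k : ℝ) ^ (-β)

/-- Convolution of two distributions on ℕ. -/
def conv (a b : ℕ → ℝ) (j : ℕ) : ℝ := ∑ i ∈ Finset.range (j + 1), a i * b (j - i)

/-- `k`-fold convolution power of a distribution on ℕ. -/
def convPow (a : ℕ → ℝ) : ℕ → ℕ → ℝ
  | 0 => fun j => if j = 0 then 1 else 0
  | k + 1 => conv (convPow a k) a

/-- Distribution whose generating function is the composition `pgf p ∘ pgf a`: the law of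
the sum of a `p`-distributed number of i.i.d. `a`-distributed variables. -/
def pgfCompDist (p a : ℕ → ℝ) (j : ℕ) : ℝ := ∑' k : ℕ, p k * convPow a k j

/-- `envDist q n` is the distribution `(P_j)` on ℕ whose generating function is
`F = f_1 ∘ ⋯ ∘ f_n`, where `q i` is the distribution with generating function `f_{i+1}`;
i.e. the law of the branching process at time `n` started from one individual. -/
def envDist (q : ℕ → ℕ → ℝ) : ℕ → ℕ → ℝ
  | 0 => fun j => if j = 1 then 1 else 0
  | n + 1 => pgfCompDist (envDist q n) (q n)

/-- The associated random walk `S_k = log m_1 + ⋯ + log m_k`. -/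
def walkS (q : ℕ → ℕ → ℝ) (k : ℕ) : ℝ :=
  ∑ i ∈ Finset.range k, Real.log (pmfMean (q i))

/-- The minimum `M_n = min_{0 ≤ k ≤ n} S_k`. -/
def walkM (q : ℕ → ℕ → ℝ) (n : ℕ) : ℝ :=
  (Finset.range (n + 1)).inf' (by simp) (walkS q)


open scoped ENNReal
open ENNReal

namespace FMBaux

/-- descending factorial as real product -/
lemma prod_cast_descFactorial (j l : ℕ) :
    ∏ i ∈ Finset.range l, ((j : ℝ) - i) = (j.descFactorial l : ℝ) := by
  induction l with
  | zero => simp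
  | succ l ih =>
    rw [Finset.prod_range_succ, ih, Nat.descFactorial_succ]
    rcases le_or_gt l j with h | h
    · push_cast [h]
      ring
    · rw [Nat.descFactorial_eq_zero_iff_lt.2 h]
      simp

/-- reindexing double sums over the "triangle" -/
lemma tsum_triangle (f : ℕ → ℕ → ℝ≥0∞) :
    ∑' j : ℕ, ∑ i ∈ Finset.range (j + 1), f i (j - i) = ∑' i : ℕ, ∑' k : ℕ, f i k := by
  have h1 : ∀ j : ℕ, ∑ i ∈ Finset.range (j + 1), f i (j - i)
      = ∑' i : ℕ, if i ≤ j then f i (j - i) else 0 := by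
    intro j
    rw [tsum_eq_sum (s := Finset.range (j + 1)) (by
      intro i hi
      rw [if_neg]
      simp only [Finset.mem_range] at hi
      omega)]
    refine Finset.sum_congr rfl fun i hi => ?_
    rw [if_pos]
    simp only [Finset.mem_range] at hi
    omega
  simp_rw [h1]
  rw [ENNReal.tsum_comm]
  refine tsum_congr fun i => ?_
  have hinj : Function.Injective (fun k : ℕ => i + k) := add_right_injective i
  rw [← Function.Injective.tsum_eq (f := fun j => if i ≤ j then f i (j - i) else 0) hinj (by
    intro x hx
    simp only [Function.mem_support] at hx
    by_cases h : i ≤ x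
    · exact ⟨x - i, by show i + (x - i) = x; omega⟩
    · simp [h] at hx)]
  refine tsum_congr fun k => ?_
  simp

/-- Vandermonde for descending factorials -/
lemma add_descFactorial (x y l : ℕ) :
    ((x + y).descFactorial l : ℝ≥0∞)
      = ∑ u ∈ Finset.range (l + 1),
          (l.choose u : ℝ≥0∞) * ((x.descFactorial u : ℝ≥0∞) * (y.descFactorial (l - u) : ℝ≥0∞)) := by
  have : (x + y).descFactorial l
      = ∑ u ∈ Finset.range (l + 1), l.choose u * (x.descFactorial u * y.descFactorial (l - u)) := by
    rw [Nat.descFactorial_eq_factorial_mul_choose, Nat.add_choose_eq, Finset.mul_sum,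
      Finset.Nat.sum_antidiagonal_eq_sum_range_succ_mk]
    refine Finset.sum_congr rfl fun u hu => ?_
    simp only [Finset.mem_range] at hu
    have hu' : u ≤ l := by omega
    rw [Nat.descFactorial_eq_factorial_mul_choose, Nat.descFactorial_eq_factorial_mul_choose,
      ← Nat.choose_mul_factorial_mul_factorial hu']
    ring
  rw [this]
  push_cast
  rfl

end FMBaux

namespace FMBaux

/-- `l`-th factorial moment, in `ℝ≥0∞`. -/
def mom (a : ℕ → ℝ) (l : ℕ) : ℝ≥0∞ :=
  ∑' j : ℕ, (j.descFactorial l : ℝ≥0∞) * ENNReal.ofReal (a j)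

lemma mom_conv (a b : ℕ → ℝ) (ha : ∀ k, 0 ≤ a k) (hb : ∀ k, 0 ≤ b k) (l : ℕ) :
    mom (conv a b) l
      = ∑ u ∈ Finset.range (l + 1), (l.choose u : ℝ≥0∞) * (mom a u * mom b (l - u)) := by
  unfold mom conv
  calc
    ∑' j : ℕ, (j.descFactorial l : ℝ≥0∞)
        * ENNReal.ofReal (∑ i ∈ Finset.range (j + 1), a i * b (j - i))
      = ∑' j : ℕ, ∑ i ∈ Finset.range (j + 1),
          (((i + (j - i)).descFactorial l : ℝ≥0∞))
            * (ENNReal.ofReal (a i) * ENNReal.ofReal (b (j - i))) := by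
        refine tsum_congr fun j => ?_
        rw [ENNReal.ofReal_sum_of_nonneg (fun i _ => mul_nonneg (ha i) (hb _)), Finset.mul_sum]
        refine Finset.sum_congr rfl fun i hi => ?_
        simp only [Finset.mem_range] at hi
        rw [ENNReal.ofReal_mul (ha _), Nat.add_sub_cancel' (by omega : i ≤ j)]
    _ = ∑' i : ℕ, ∑' k : ℕ, (((i + k).descFactorial l : ℝ≥0∞))
          * (ENNReal.ofReal (a i) * ENNReal.ofReal (b k)) :=
        tsum_triangle (fun i k => ((i + k).descFactorial l : ℝ≥0∞) * (ENNReal.ofReal (a i) * ENNReal.ofReal (b k)))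
    _ = ∑' i : ℕ, ∑' k : ℕ, ∑ u ∈ Finset.range (l + 1),
          (l.choose u : ℝ≥0∞) * (((i.descFactorial u : ℝ≥0∞) * ENNReal.ofReal (a i))
            * ((k.descFactorial (l - u) : ℝ≥0∞) * ENNReal.ofReal (b k))) := by
        refine tsum_congr fun i => tsum_congr fun k => ?_
        rw [add_descFactorial, Finset.sum_mul]
        exact Finset.sum_congr rfl fun u _ => by ring
    _ = ∑ u ∈ Finset.range (l + 1), (l.choose u : ℝ≥0∞)
          * ((∑' i : ℕ, (i.descFactorial u : ℝ≥0∞) * ENNReal.ofReal (a i))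
            * (∑' k : ℕ, (k.descFactorial (l - u) : ℝ≥0∞) * ENNReal.ofReal (b k))) := by
        rw [tsum_congr fun i => Summable.tsum_finsetSum fun u _ => ENNReal.summable,
          Summable.tsum_finsetSum fun u _ => ENNReal.summable]
        refine Finset.sum_congr rfl fun u _ => ?_
        simp_rw [ENNReal.tsum_mul_left, ENNReal.tsum_mul_right]

lemma mom_convPow_zero (a : ℕ → ℝ) (l : ℕ) :
    mom (convPow a 0) l = if l = 0 then 1 else 0 := by
  unfold mom convPow
  rw [tsum_eq_single 0 (by intro j hj; simp [hj])]
  cases l <;> simp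

end FMBaux

namespace FMBaux

/-- recursive coefficients controlling moments of convolution powers -/
def V (μ : ℕ → ℝ≥0∞) : ℕ → ℕ → ℝ≥0∞
  | l, 0 => if l = 0 then 1 else 0
  | l, r + 1 => ((r : ℝ≥0∞) + 1)⁻¹ *
      ∑ u ∈ Finset.range l, (l.choose u : ℝ≥0∞) * (V μ u r * μ (l - u))

lemma V_eq_zero_of_lt (μ : ℕ → ℝ≥0∞) : ∀ r l, l < r → V μ l r = 0 := by
  intro r
  induction r with
  | zero => omega
  | succ r ih =>
    intro l hl
    rw [V]
    rw [Finset.sum_eq_zero, mul_zero]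
    intro u hu
    simp only [Finset.mem_range] at hu
    rw [ih u (by omega), zero_mul, mul_zero]

lemma succ_dF (k r : ℕ) :
    (k + 1).descFactorial (r + 1) = k.descFactorial (r + 1) + (r + 1) * k.descFactorial r := by
  rcases le_or_gt r k with h | h
  · rw [Nat.succ_descFactorial_succ, Nat.descFactorial_succ]
    have hk : k + 1 = (k - r) + (r + 1) := by omega
    rw [hk, Nat.add_mul]
  · rw [Nat.descFactorial_eq_zero_iff_lt.2 h,
      Nat.descFactorial_eq_zero_iff_lt.2 (by omega : k < r + 1),
      Nat.descFactorial_eq_zero_iff_lt.2 (by omega : k + 1 < r + 1)]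
    simp

lemma convPow_nonneg (a : ℕ → ℝ) (ha : ∀ k, 0 ≤ a k) : ∀ k j, 0 ≤ convPow a k j := by
  intro k
  induction k with
  | zero => intro j; unfold convPow; positivity
  | succ k ih =>
    intro j
    unfold convPow conv
    exact Finset.sum_nonneg fun i _ => mul_nonneg (ih i) (ha _)

lemma sum_choose_V (μ : ℕ → ℝ≥0∞) (l r : ℕ) :
    ∑ u ∈ Finset.range l, (l.choose u : ℝ≥0∞) * (V μ u r * μ (l - u))
      = ((r : ℝ≥0∞) + 1) * V μ l (r + 1) := by
  rw [V, ← mul_assoc, ENNReal.mul_inv_cancel (zero_lt_one.trans_le le_add_self).ne'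
    (by simp), one_mul]

lemma mom_convPow_le (a : ℕ → ℝ) (ha : ∀ k, 0 ≤ a k) (hmass : mom a 0 ≤ 1) (k l : ℕ) :
    mom (convPow a k) l
      ≤ ∑ r ∈ Finset.range (l + 1), (k.descFactorial r : ℝ≥0∞) * V (mom a) l r := by
  induction k generalizing l with
  | zero =>
    rw [mom_convPow_zero]
    have h0 : (if l = 0 then (1 : ℝ≥0∞) else 0)
        = ((Nat.descFactorial 0 0 : ℕ) : ℝ≥0∞) * V (mom a) l 0 := by
      rw [V]; simp
    rw [h0]
    exact Finset.single_le_sum (f := fun r => ((0:ℕ).descFactorial r : ℝ≥0∞) * V (mom a) l r)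
      (fun _ _ => zero_le) (by simp)
  | succ k ih =>
    have step1 : mom (convPow a (k + 1)) l
        = ∑ u ∈ Finset.range (l + 1),
            (l.choose u : ℝ≥0∞) * (mom (convPow a k) u * mom a (l - u)) := by
      show mom (conv (convPow a k) a) l = _
      exact mom_conv _ _ (convPow_nonneg a ha k) ha l
    have step2 : mom (convPow a (k + 1)) l
        ≤ ∑ u ∈ Finset.range (l + 1), (l.choose u : ℝ≥0∞) *
            ((∑ r ∈ Finset.range (l + 1), (k.descFactorial r : ℝ≥0∞) * V (mom a) u r)
              * mom a (l - u)) := by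
      rw [step1]
      refine Finset.sum_le_sum fun u hu => ?_
      refine mul_le_mul_right (mul_le_mul_left ?_ _) _
      refine (ih u).trans ?_
      refine Finset.sum_le_sum_of_subset_of_nonneg ?_ (fun _ _ _ => zero_le)
      apply Finset.range_subset_range.2
      simp only [Finset.mem_range] at hu
      omega
    refine step2.trans ?_
    calc ∑ u ∈ Finset.range (l + 1), (l.choose u : ℝ≥0∞) *
            ((∑ r ∈ Finset.range (l + 1), (k.descFactorial r : ℝ≥0∞) * V (mom a) u r)
              * mom a (l - u))
        = ∑ u ∈ Finset.range (l + 1), ∑ r ∈ Finset.range (l + 1),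
            (k.descFactorial r : ℝ≥0∞) * ((l.choose u : ℝ≥0∞) * (V (mom a) u r * mom a (l - u))) := by
          refine Finset.sum_congr rfl fun u _ => ?_
          rw [Finset.sum_mul, Finset.mul_sum]
          exact Finset.sum_congr rfl fun r _ => by ring
      _ = ∑ r ∈ Finset.range (l + 1), ∑ u ∈ Finset.range (l + 1),
            (k.descFactorial r : ℝ≥0∞) * ((l.choose u : ℝ≥0∞) * (V (mom a) u r * mom a (l - u))) :=
          Finset.sum_comm
      _ = ∑ r ∈ Finset.range (l + 1), (k.descFactorial r : ℝ≥0∞) *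
            (((r : ℝ≥0∞) + 1) * V (mom a) l (r + 1) + V (mom a) l r * mom a 0) := by
          refine Finset.sum_congr rfl fun r _ => ?_
          rw [← Finset.mul_sum, Finset.sum_range_succ, sum_choose_V]
          simp [Nat.choose_self]
      _ ≤ ∑ r ∈ Finset.range (l + 1), ((k.descFactorial r : ℝ≥0∞) *
            (((r : ℝ≥0∞) + 1) * V (mom a) l (r + 1)) + (k.descFactorial r : ℝ≥0∞) * V (mom a) l r) := by
          refine Finset.sum_le_sum fun r _ => ?_
          rw [mul_add]
          refine add_le_add_right ?_ _
          calc (k.descFactorial r : ℝ≥0∞) * (V (mom a) l r * mom a 0)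
              ≤ (k.descFactorial r : ℝ≥0∞) * (V (mom a) l r * 1) :=
                mul_le_mul_right (mul_le_mul_right hmass _) _
            _ = (k.descFactorial r : ℝ≥0∞) * V (mom a) l r := by rw [mul_one]
      _ = ∑ r ∈ Finset.range (l + 1), (((k+1).descFactorial r : ℕ) : ℝ≥0∞) * V (mom a) l r := by
          have key : ∀ i : ℕ, (((k+1).descFactorial (i+1) : ℕ) : ℝ≥0∞) * V (mom a) l (i+1)
              = (k.descFactorial (i+1) : ℝ≥0∞) * V (mom a) l (i+1)
                + (k.descFactorial i : ℝ≥0∞) * (((i : ℝ≥0∞) + 1) * V (mom a) l (i+1)) := by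
            intro i
            rw [succ_dF]
            push_cast
            ring
          rw [Finset.sum_add_distrib,
            Finset.sum_range_succ (f := fun r => (k.descFactorial r : ℝ≥0∞) *
              (((r : ℝ≥0∞) + 1) * V (mom a) l (r + 1))),
            V_eq_zero_of_lt (mom a) (l+1) l (by omega), mul_zero, mul_zero, add_zero,
            Finset.sum_range_succ' (f := fun r => (((k+1).descFactorial r : ℕ) : ℝ≥0∞) * V (mom a) l r),
            Finset.sum_range_succ' (f := fun r => (k.descFactorial r : ℝ≥0∞) * V (mom a) l r)]
          simp only [key, Nat.descFactorial_zero, Nat.cast_one, one_mul]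
          rw [Finset.sum_add_distrib]
          ring

end FMBaux

namespace FMBaux

lemma ofReal_tsum_le (f : ℕ → ℝ) (hf : ∀ n, 0 ≤ f n) :
    ENNReal.ofReal (∑' n, f n) ≤ ∑' n, ENNReal.ofReal (f n) := by
  by_cases h : Summable f
  · rw [ENNReal.ofReal_tsum_of_nonneg hf h]
  · rw [tsum_eq_zero_of_not_summable h]
    simp

lemma mom_pgfCompDist_le (p a : ℕ → ℝ) (hp : ∀ k, 0 ≤ p k) (ha : ∀ k, 0 ≤ a k)
    (hmass : mom a 0 ≤ 1) (l : ℕ) :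
    mom (pgfCompDist p a) l ≤ ∑ r ∈ Finset.range (l + 1), V (mom a) l r * mom p r := by
  have h1 : mom (pgfCompDist p a) l ≤ ∑' k : ℕ, ENNReal.ofReal (p k) * mom (convPow a k) l := by
    unfold mom pgfCompDist
    calc ∑' j : ℕ, (j.descFactorial l : ℝ≥0∞) * ENNReal.ofReal (∑' k : ℕ, p k * convPow a k j)
        ≤ ∑' j : ℕ, (j.descFactorial l : ℝ≥0∞) * ∑' k : ℕ, ENNReal.ofReal (p k * convPow a k j) :=
          Summable.tsum_le_tsum (fun j => mul_le_mul_right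
            (ofReal_tsum_le _ fun k => mul_nonneg (hp k) (convPow_nonneg a ha k j)) _)
            ENNReal.summable ENNReal.summable
      _ = ∑' j : ℕ, ∑' k : ℕ, ENNReal.ofReal (p k)
            * ((j.descFactorial l : ℝ≥0∞) * ENNReal.ofReal (convPow a k j)) := by
          refine tsum_congr fun j => ?_
          rw [← ENNReal.tsum_mul_left]
          refine tsum_congr fun k => ?_
          rw [ENNReal.ofReal_mul (hp k)]
          ring
      _ = ∑' k : ℕ, ∑' j : ℕ, ENNReal.ofReal (p k)
            * ((j.descFactorial l : ℝ≥0∞) * ENNReal.ofReal (convPow a k j)) := ENNReal.tsum_comm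
      _ = ∑' k : ℕ, ENNReal.ofReal (p k) * mom (convPow a k) l := by
          refine tsum_congr fun k => ?_
          rw [ENNReal.tsum_mul_left]
          rfl
  refine h1.trans ?_
  calc ∑' k : ℕ, ENNReal.ofReal (p k) * mom (convPow a k) l
      ≤ ∑' k : ℕ, ENNReal.ofReal (p k)
          * ∑ r ∈ Finset.range (l + 1), (k.descFactorial r : ℝ≥0∞) * V (mom a) l r :=
        Summable.tsum_le_tsum (fun k => mul_le_mul_right (mom_convPow_le a ha hmass k l) _)
          ENNReal.summable ENNReal.summable
    _ = ∑' k : ℕ, ∑ r ∈ Finset.range (l + 1),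
          V (mom a) l r * ((k.descFactorial r : ℝ≥0∞) * ENNReal.ofReal (p k)) := by
        refine tsum_congr fun k => ?_
        rw [Finset.mul_sum]
        exact Finset.sum_congr rfl fun r _ => by ring
    _ = ∑ r ∈ Finset.range (l + 1), V (mom a) l r * mom p r := by
        rw [Summable.tsum_finsetSum fun r _ => ENNReal.summable]
        refine Finset.sum_congr rfl fun r _ => ?_
        rw [ENNReal.tsum_mul_left]
        rfl

lemma V_diag (μ : ℕ → ℝ≥0∞) : ∀ l, V μ l l = μ 1 ^ l := by
  intro l
  induction l with
  | zero => rw [V]; simp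
  | succ l ih =>
    show ((l : ℝ≥0∞) + 1)⁻¹ *
        ∑ u ∈ Finset.range (l + 1), ((l+1).choose u : ℝ≥0∞) * (V μ u l * μ (l + 1 - u)) = _
    rw [Finset.sum_eq_single_of_mem l (by simp)]
    · rw [Nat.choose_succ_self_right, ih, Nat.add_sub_cancel_left]
      push_cast
      rw [← mul_assoc, ENNReal.inv_mul_cancel (zero_lt_one.trans_le le_add_self).ne' (by simp),
        one_mul, pow_succ]
    · intro u hu hne
      simp only [Finset.mem_range] at hu
      rw [V_eq_zero_of_lt μ l u (by omega), zero_mul, mul_zero]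

lemma V_bound (μ : ℕ → ℝ≥0∞) (A M : ℝ≥0∞) (L : ℕ) (hA : 1 ≤ A)
    (hμ : ∀ j, 1 ≤ j → j ≤ L → μ j ≤ A * M) :
    ∀ r l, l ≤ L → V μ l r ≤ ((2 : ℝ≥0∞) ^ L * A) ^ l * M ^ r := by
  have hB : (1 : ℝ≥0∞) ≤ 2 ^ L * A := by
    calc (1 : ℝ≥0∞) = 1 * 1 := (one_mul 1).symm
      _ ≤ 2 ^ L * A := mul_le_mul' (one_le_pow_of_one_le' one_le_two L) hA
  intro r
  induction r with
  | zero =>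
    intro l _
    rw [pow_zero, mul_one, V]
    split
    · exact one_le_pow_of_one_le' hB l
    · exact zero_le
  | succ r ih =>
    intro l hl
    rcases Nat.eq_zero_or_pos l with rfl | hlpos
    · rw [V]
      simp
    rw [V]
    calc ((r : ℝ≥0∞) + 1)⁻¹ * ∑ u ∈ Finset.range l, (l.choose u : ℝ≥0∞) * (V μ u r * μ (l - u))
        ≤ ∑ u ∈ Finset.range l, (l.choose u : ℝ≥0∞) * (V μ u r * μ (l - u)) := by
          refine mul_le_of_le_one_left (zero_le) ?_
          exact ENNReal.inv_le_one.2 le_add_self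
      _ ≤ ∑ u ∈ Finset.range l, (l.choose u : ℝ≥0∞) * ((2 ^ L * A : ℝ≥0∞) ^ (l-1) * M ^ r * (A * M)) := by
          refine Finset.sum_le_sum fun u hu => ?_
          simp only [Finset.mem_range] at hu
          refine mul_le_mul_right (mul_le_mul ?_ ?_ (zero_le) (zero_le)) _
          · exact (ih u (by omega)).trans
              (mul_le_mul_left (pow_le_pow_right₀ hB (by omega)) _)
          · exact hμ (l - u) (by omega) (by omega)
      _ = (∑ u ∈ Finset.range l, (l.choose u : ℝ≥0∞)) * ((2 ^ L * A : ℝ≥0∞) ^ (l-1) * M ^ r * (A * M)) :=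
          (Finset.sum_mul _ _ _).symm
      _ ≤ (2 : ℝ≥0∞) ^ L * ((2 ^ L * A : ℝ≥0∞) ^ (l-1) * M ^ r * (A * M)) := by
          refine mul_le_mul_left ?_ _
          calc (∑ u ∈ Finset.range l, (l.choose u : ℝ≥0∞))
              ≤ ∑ u ∈ Finset.range (l + 1), (l.choose u : ℝ≥0∞) :=
                Finset.sum_le_sum_of_subset (Finset.range_subset_range.2 (by omega))
            _ = ((2 ^ l : ℕ) : ℝ≥0∞) := by
                rw [← Nat.sum_range_choose]
                push_cast
                rfl
            _ ≤ (2 : ℝ≥0∞) ^ L := by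
                push_cast
                exact pow_le_pow_right₀ one_le_two (by omega)
      _ ≤ ((2 : ℝ≥0∞) ^ L * A) ^ l * M ^ (r + 1) := by
          have h1 : ((2:ℝ≥0∞) ^ L * A) ^ (l-1) * ((2:ℝ≥0∞) ^ L * A) = ((2:ℝ≥0∞) ^ L * A) ^ l := by
            rw [← pow_succ]
            congr 1
            omega
          refine le_of_eq ?_
          calc (2:ℝ≥0∞) ^ L * (((2:ℝ≥0∞) ^ L * A) ^ (l-1) * M ^ r * (A * M))
              = ((2:ℝ≥0∞) ^ L * A) ^ (l-1) * ((2:ℝ≥0∞) ^ L * A) * (M ^ r * M) := by ring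
            _ = ((2:ℝ≥0∞) ^ L * A) ^ l * M ^ (r + 1) := by rw [h1, ← pow_succ]

end FMBaux

namespace FMBaux

lemma mom_zero_eq_one (a : ℕ → ℝ) (ha : ∀ k, 0 ≤ a k) (hsum : HasSum a 1) :
    mom a 0 = 1 := by
  unfold mom
  simp only [Nat.descFactorial_zero, Nat.cast_one, one_mul]
  rw [← ENNReal.ofReal_tsum_of_nonneg ha hsum.summable, hsum.tsum_eq]
  exact ENNReal.ofReal_one

lemma mom_one_eq (a : ℕ → ℝ) (ha : ∀ k, 0 ≤ a k)
    (hs : Summable (fun k : ℕ => (k : ℝ) * a k)) :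
    mom a 1 = ENNReal.ofReal (pmfMean a) := by
  unfold mom pmfMean
  rw [ENNReal.ofReal_tsum_of_nonneg (fun k => mul_nonneg (Nat.cast_nonneg k) (ha k)) hs]
  refine tsum_congr fun j => ?_
  rw [ENNReal.ofReal_mul (Nat.cast_nonneg j), ENNReal.ofReal_natCast, Nat.descFactorial_one]

lemma dF_eq_sum (r : ℕ) : ∀ k : ℕ,
    k.descFactorial (r + 1) = (r + 1) * ∑ i ∈ Finset.range k, i.descFactorial r := by
  intro k
  induction k with
  | zero => simp
  | succ k ih =>
    rw [succ_dF, ih, Finset.sum_range_succ, Nat.mul_add]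

lemma summable_tail (a : ℕ → ℝ) (ha : ∀ k, 0 ≤ a k) (hsum : Summable a) (i : ℕ) :
    Summable (fun k : ℕ => if i < k then a k else 0) := by
  refine Summable.of_nonneg_of_le (fun k => ?_) (fun k => ?_) hsum
  · split <;> simp [ha]
  · split <;> simp [ha]

lemma tail_zero_le_one (a : ℕ → ℝ) (ha : ∀ k, 0 ≤ a k) (hsum : HasSum a 1) :
    tailAt a 0 ≤ 1 := by
  unfold tailAt
  rw [← hsum.tsum_eq]
  refine Summable.tsum_le_tsum (fun k => ?_) (summable_tail a ha hsum.summable 0) hsum.summable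
  split <;> simp [ha]

lemma tail_nonneg (a : ℕ → ℝ) (ha : ∀ k, 0 ≤ a k) (i : ℕ) : 0 ≤ tailAt a i := by
  refine tsum_nonneg fun k => ?_
  split <;> simp [ha]

/-- moment bound from the tail condition -/
lemma mom_le_of_tail (β d : ℝ) (L : ℕ) (hd : 0 < d) (hL : (L : ℝ) < β) (hL1 : 1 ≤ L)
    (a : ℕ → ℝ) (hoff : IsOffspring a) (htail : TailCond β d a)
    (j : ℕ) (hj2 : 2 ≤ j) (hjL : j ≤ L) :
    mom a j ≤ ENNReal.ofReal ((L : ℝ) * (d * ∑' i : ℕ, (i : ℝ) ^ ((L : ℝ) - 1 - β)))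
      * ENNReal.ofReal (pmfMean a) := by
  obtain ⟨ha, hsum, hsl, hm⟩ := hoff
  set m := pmfMean a with hmdef
  set Z : ℝ := ∑' i : ℕ, (i : ℝ) ^ ((L : ℝ) - 1 - β) with hZdef
  have hZsummable : Summable (fun i : ℕ => (i : ℝ) ^ ((L : ℝ) - 1 - β)) :=
    Real.summable_nat_rpow.2 (by linarith)
  obtain ⟨r, rfl⟩ : ∃ r, j = r + 1 := ⟨j - 1, by omega⟩
  have step1 : mom a (r + 1)
      = ((r : ℝ≥0∞) + 1) * ∑' i : ℕ, (i.descFactorial r : ℝ≥0∞) * ENNReal.ofReal (tailAt a i) := by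
    unfold mom
    calc ∑' k : ℕ, (k.descFactorial (r + 1) : ℝ≥0∞) * ENNReal.ofReal (a k)
        = ∑' k : ℕ, ((r : ℝ≥0∞) + 1) * ∑ i ∈ Finset.range k,
            (i.descFactorial r : ℝ≥0∞) * ENNReal.ofReal (a k) := by
          refine tsum_congr fun k => ?_
          rw [dF_eq_sum r k]
          push_cast
          rw [mul_assoc, Finset.sum_mul]
      _ = ((r : ℝ≥0∞) + 1) * ∑' k : ℕ, ∑' i : ℕ,
            (if i < k then (i.descFactorial r : ℝ≥0∞) * ENNReal.ofReal (a k) else 0) := by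
          rw [← ENNReal.tsum_mul_left]
          refine tsum_congr fun k => ?_
          congr 1
          rw [tsum_eq_sum (s := Finset.range k) (by
            intro i hi
            rw [if_neg]
            simp only [Finset.mem_range] at hi
            omega)]
          refine Finset.sum_congr rfl fun i hi => ?_
          simp only [Finset.mem_range] at hi
          rw [if_pos hi]
      _ = ((r : ℝ≥0∞) + 1) * ∑' i : ℕ,
            (i.descFactorial r : ℝ≥0∞) * ENNReal.ofReal (tailAt a i) := by
          congr 1
          rw [ENNReal.tsum_comm]
          refine tsum_congr fun i => ?_
          have : ∀ k : ℕ, (if i < k then (i.descFactorial r : ℝ≥0∞) * ENNReal.ofReal (a k) else 0)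
              = (i.descFactorial r : ℝ≥0∞) * (if i < k then ENNReal.ofReal (a k) else 0) := by
            intro k
            split <;> simp
          rw [tsum_congr this, ENNReal.tsum_mul_left]
          congr 1
          unfold tailAt
          rw [ENNReal.ofReal_tsum_of_nonneg (fun k => by split <;> simp [ha])
            (summable_tail a ha hsum.summable i)]
          refine tsum_congr fun k => ?_
          split <;> simp
  have hterm : ∀ i : ℕ, (i.descFactorial r : ℝ≥0∞) * ENNReal.ofReal (tailAt a i)
      ≤ ENNReal.ofReal (d * m) * ENNReal.ofReal ((i : ℝ) ^ ((L : ℝ) - 1 - β)) := by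
    intro i
    rcases Nat.eq_zero_or_pos i with rfl | hi
    · rw [Nat.descFactorial_eq_zero_iff_lt.2 (by omega : 0 < r), Nat.cast_zero, zero_mul]
      exact zero_le
    · have h1 : tailAt a i ≤ d * m * (i : ℝ) ^ (-β) := by
        refine (htail i hi).trans ?_
        have hq0 : tailAt a 0 ≤ 1 := tail_zero_le_one a ha hsum
        have hn : (0:ℝ) ≤ (i : ℝ) ^ (-β) := Real.rpow_nonneg (Nat.cast_nonneg i) _
        have h2 : d * tailAt a 0 * min m 1 ≤ d * m := by
          have hmin : min m 1 ≤ m := min_le_left m 1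
          have hminn : (0:ℝ) ≤ min m 1 := le_min hm.le zero_le_one
          have hq0n : (0:ℝ) ≤ tailAt a 0 := tail_nonneg a ha 0
          have key : tailAt a 0 * min m 1 ≤ m := by nlinarith
          calc d * tailAt a 0 * min m 1 = d * (tailAt a 0 * min m 1) := by ring
            _ ≤ d * m := mul_le_mul_of_nonneg_left key hd.le
        exact mul_le_mul_of_nonneg_right h2 hn
      have h2 : (i.descFactorial r : ℝ≥0∞) ≤ ENNReal.ofReal ((i : ℝ) ^ ((L : ℝ) - 1)) := by
        have hdn : i.descFactorial r ≤ i ^ (L - 1) :=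
          (Nat.descFactorial_le_pow i r).trans (Nat.pow_le_pow_right (by omega) (by omega))
        calc (i.descFactorial r : ℝ≥0∞) ≤ ((i ^ (L - 1) : ℕ) : ℝ≥0∞) := by exact_mod_cast hdn
          _ = ENNReal.ofReal ((i : ℝ) ^ ((L : ℝ) - 1)) := by
            rw [← ENNReal.ofReal_natCast]
            congr 1
            push_cast
            rw [← Real.rpow_natCast (i : ℝ) (L - 1)]
            congr 1
            push_cast [Nat.cast_sub hL1]
            ring
      calc (i.descFactorial r : ℝ≥0∞) * ENNReal.ofReal (tailAt a i)
          ≤ ENNReal.ofReal ((i : ℝ) ^ ((L : ℝ) - 1)) * ENNReal.ofReal (d * m * (i : ℝ) ^ (-β)) :=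
            mul_le_mul h2 (ENNReal.ofReal_le_ofReal h1) (zero_le) (zero_le)
        _ = ENNReal.ofReal (d * m) * ENNReal.ofReal ((i : ℝ) ^ ((L : ℝ) - 1) * (i : ℝ) ^ (-β)) := by
            rw [← ENNReal.ofReal_mul (by positivity), ← ENNReal.ofReal_mul (by positivity)]
            congr 1
            ring
        _ = ENNReal.ofReal (d * m) * ENNReal.ofReal ((i : ℝ) ^ ((L : ℝ) - 1 - β)) := by
            congr 1
            rw [show (L:ℝ) - 1 - β = ((L:ℝ) - 1) + (-β) from by ring,
              Real.rpow_add (by exact_mod_cast hi : (0:ℝ) < (i:ℝ))]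
  calc mom a (r + 1)
      ≤ ((r : ℝ≥0∞) + 1) * ∑' i : ℕ,
          (ENNReal.ofReal (d * m) * ENNReal.ofReal ((i : ℝ) ^ ((L : ℝ) - 1 - β))) := by
        rw [step1]
        exact mul_le_mul_right (Summable.tsum_le_tsum hterm ENNReal.summable ENNReal.summable) _
    _ = ((r : ℝ≥0∞) + 1) * (ENNReal.ofReal (d * m) * ENNReal.ofReal Z) := by
        rw [ENNReal.tsum_mul_left, hZdef,
          ENNReal.ofReal_tsum_of_nonneg (fun i => Real.rpow_nonneg (Nat.cast_nonneg i) _)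
            hZsummable]
    _ ≤ (L : ℝ≥0∞) * (ENNReal.ofReal (d * m) * ENNReal.ofReal Z) := by
        refine mul_le_mul_left ?_ _
        have : ((r : ℝ≥0∞) + 1) = ((r + 1 : ℕ) : ℝ≥0∞) := by push_cast; ring
        rw [this]
        exact_mod_cast Nat.cast_le.2 hjL
    _ = ENNReal.ofReal ((L : ℝ) * (d * Z)) * ENNReal.ofReal m := by
        have hZ0 : 0 ≤ Z := tsum_nonneg fun i => Real.rpow_nonneg (Nat.cast_nonneg i) _
        rw [ENNReal.ofReal_mul (by positivity), ENNReal.ofReal_mul (by positivity),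
          ENNReal.ofReal_mul (by positivity), ← ENNReal.ofReal_natCast L]
        ring

end FMBaux

namespace FMBaux

lemma envDist_nonneg (q : ℕ → ℕ → ℝ) : ∀ n, (∀ i < n, ∀ k, 0 ≤ q i k) →
    ∀ j, 0 ≤ envDist q n j := by
  intro n
  induction n with
  | zero => intro _ j; unfold envDist; positivity
  | succ n ih =>
    intro hq j
    show 0 ≤ pgfCompDist (envDist q n) (q n) j
    unfold pgfCompDist
    refine tsum_nonneg fun k => mul_nonneg (ih (fun i hi => hq i (by omega)) k)
      (convPow_nonneg (q n) (hq n (by omega)) k j)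

lemma mom_envDist_zero (q : ℕ → ℕ → ℝ) (r : ℕ) :
    mom (envDist q 0) r = ((Nat.descFactorial 1 r : ℕ) : ℝ≥0∞) := by
  unfold mom envDist
  rw [tsum_eq_single 1 (by intro j hj; simp [hj])]
  simp

lemma walkM_le_walkS (q : ℕ → ℕ → ℝ) (n k : ℕ) (hk : k ≤ n) : walkM q n ≤ walkS q k :=
  Finset.inf'_le _ (by simp only [Finset.mem_range]; omega)

lemma walkM_succ_le (q : ℕ → ℕ → ℝ) (n : ℕ) : walkM q (n + 1) ≤ walkM q n := by
  obtain ⟨k, hk, hval⟩ := Finset.exists_mem_eq_inf' (s := Finset.range (n + 1)) (by simp) (walkS q)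
  rw [show walkM q n = walkS q k from hval]
  refine walkM_le_walkS q (n + 1) k ?_
  simp only [Finset.mem_range] at hk
  omega

lemma walkS_succ (q : ℕ → ℕ → ℝ) (n : ℕ) :
    walkS q (n + 1) = walkS q n + Real.log (pmfMean (q n)) := Finset.sum_range_succ _ _

/-- the key real-exponential inequality for one step -/
lemma exp_step (Sn Sn1 Mn Mn1 m' : ℝ) (hm' : 0 < m') (hS : Sn1 = Sn + Real.log m')
    (hM1 : Mn1 ≤ Mn) (hM2 : Mn1 ≤ Sn1) (l r : ℕ) (hr : 1 ≤ r) (hrl : r ≤ l) :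
    m' ^ r * Real.exp (Sn + ((r : ℝ) - 1) * (Sn - Mn))
      ≤ Real.exp (Sn1 + ((l : ℝ) - 1) * (Sn1 - Mn1)) := by
  have hpow : m' ^ r = Real.exp ((r : ℝ) * Real.log m') := by
    rw [← Real.log_pow, Real.exp_log (by positivity)]
  rw [hpow, ← Real.exp_add, Real.exp_le_exp]
  have key : ((r : ℝ) - 1) * (Sn1 - Mn) ≤ ((l : ℝ) - 1) * (Sn1 - Mn1) := by
    rcases le_or_gt Sn1 Mn with h | h
    · have h1 : ((r : ℝ) - 1) * (Sn1 - Mn) ≤ 0 := by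
        have : (1:ℝ) ≤ (r:ℝ) := by exact_mod_cast hr
        nlinarith
      have h2 : (0:ℝ) ≤ ((l : ℝ) - 1) * (Sn1 - Mn1) := by
        have : (1:ℝ) ≤ (l:ℝ) := by exact_mod_cast hr.trans hrl
        nlinarith
      linarith
    · refine mul_le_mul ?_ ?_ (by linarith) ?_
      · have : (r:ℝ) ≤ (l:ℝ) := by exact_mod_cast hrl
        linarith
      · linarith
      · have : (1:ℝ) ≤ (l:ℝ) := by exact_mod_cast hr.trans hrl
        linarith
  have hr1 : (1:ℝ) ≤ (r:ℝ) := by exact_mod_cast hr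
  nlinarith [key]

/-- geometric sum bound -/
lemma geom_bound (x : ℝ) (hx : 2 ≤ x) : ∀ l : ℕ, 1 ≤ l →
    ∑ r ∈ Finset.range l, x ^ r ≤ 2 * x ^ (l - 1) := by
  intro l
  induction l with
  | zero => omega
  | succ l ih =>
    intro _
    rcases Nat.eq_zero_or_pos l with rfl | hl
    · simp
    rw [Finset.sum_range_succ]
    have h2 : x ^ l ≤ x ^ l := le_refl _
    have h3 : (2:ℝ) * x ^ (l-1) ≤ x ^ l := by
      have : x ^ l = x * x ^ (l - 1) := by
        rw [← pow_succ']
        congr 1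
        omega
      rw [this]
      have hp : (0:ℝ) ≤ x ^ (l-1) := by positivity
      nlinarith
    have := ih hl
    have hl1 : l + 1 - 1 = l := by omega
    rw [hl1]
    nlinarith

/-- `n^(l-1) + n^(l-2) ≤ (n+1)^(l-1)` for `l ≥ 2`, `n ≥ 1`, in ℝ via ℕ -/
lemma pow_step (n : ℕ) (hn : 1 ≤ n) : ∀ m : ℕ, 1 ≤ m →
    (n : ℝ) ^ m + (n : ℝ) ^ (m - 1) ≤ ((n : ℝ) + 1) ^ m := by
  intro m
  induction m with
  | zero => omega
  | succ m ih =>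
    intro _
    rcases Nat.eq_zero_or_pos m with rfl | hm
    · simp
    have hih := ih hm
    have h1 : ((n:ℝ) + 1) ^ (m + 1) = ((n:ℝ) + 1) ^ m * ((n:ℝ) + 1) := pow_succ _ _
    have h2 : ((n:ℝ)^m + (n:ℝ)^(m-1)) * ((n:ℝ) + 1) ≤ ((n:ℝ)+1)^m * ((n:ℝ)+1) := by
      have hn0 : (0:ℝ) ≤ (n:ℝ) + 1 := by positivity
      nlinarith
    have h3 : (n:ℝ)^(m+1) + (n:ℝ)^(m+1-1) ≤ ((n:ℝ)^m + (n:ℝ)^(m-1)) * ((n:ℝ)+1) := by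
      have e1 : (n:ℝ)^(m+1) = (n:ℝ)^m * n := pow_succ _ _
      have e2 : (n:ℝ)^m = (n:ℝ)^(m-1) * n := by
        rw [← pow_succ]
        congr 1
        omega
      have hm1 : m + 1 - 1 = m := by omega
      rw [hm1, e1]
      have hp : (0:ℝ) ≤ (n:ℝ)^(m-1) := by positivity
      have hp2 : (0:ℝ) ≤ (n:ℝ)^m := by positivity
      have hn1 : (1:ℝ) ≤ (n:ℝ) := by exact_mod_cast hn
      nlinarith
    linarith

end FMBaux

namespace FMBaux

lemma main_aux (β d : ℝ) (hd : 0 < d) (L : ℕ) (hL2 : 2 ≤ L) (hLβ : (L : ℝ) < β)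
    (K : ℝ) (hK1 : 1 ≤ K)
    (hKdef : (L : ℝ) * (d * ∑' i : ℕ, (i : ℝ) ^ ((L : ℝ) - 1 - β)) ≤ K)
    (G : ℝ) (hGdef : G = (2 ^ L * K) ^ L)
    (q : ℕ → ℕ → ℝ) (N : ℕ)
    (hoff : ∀ i < N, IsOffspring (q i)) (htail : ∀ i < N, TailCond β d (q i)) :
    ∀ l, 1 ≤ l → l ≤ L → ∀ n, 1 ≤ n → n ≤ N →
      mom (envDist q n) l ≤ ENNReal.ofReal ((2 * G) ^ l * (n : ℝ) ^ (l - 1) *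
        Real.exp (walkS q n + ((l : ℝ) - 1) * (walkS q n - walkM q n))) := by
  have hG1 : (1 : ℝ) ≤ G := by
    rw [hGdef]
    refine one_le_pow₀ ?_
    calc (1:ℝ) = 1 * 1 := by ring
      _ ≤ 2 ^ L * K := by
        refine mul_le_mul ?_ hK1 zero_le_one (by positivity)
        exact one_le_pow₀ (by norm_num)
  have hG0 : (0 : ℝ) < G := by linarith
  -- moment bounds for each environment distribution
  have hμ : ∀ i, i < N → ∀ j, 1 ≤ j → j ≤ L →
      mom (q i) j ≤ ENNReal.ofReal K * ENNReal.ofReal (pmfMean (q i)) := by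
    intro i hiN j hj1 hjL
    rcases Nat.lt_or_ge j 2 with hj2 | hj2
    · have hj : j = 1 := by omega
      subst hj
      rw [mom_one_eq (q i) (hoff i hiN).1 (hoff i hiN).2.2.1]
      exact le_mul_of_one_le_left (zero_le) (ENNReal.one_le_ofReal.2 hK1)
    · refine (mom_le_of_tail β d L hd hLβ (by omega) (q i) (hoff i hiN) (htail i hiN)
        j hj2 hjL).trans ?_
      exact mul_le_mul_left (ENNReal.ofReal_le_ofReal hKdef) _
  have hVb : ∀ i, i < N → ∀ l' r, l' ≤ L →
      V (mom (q i)) l' r ≤ ENNReal.ofReal G * ENNReal.ofReal (pmfMean (q i)) ^ r := by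
    intro i hiN l' r hl'
    have hA1 : (1 : ℝ≥0∞) ≤ ENNReal.ofReal K := ENNReal.one_le_ofReal.2 hK1
    refine (V_bound (mom (q i)) (ENNReal.ofReal K) (ENNReal.ofReal (pmfMean (q i))) L hA1
      (hμ i hiN) r l' hl').trans ?_
    refine mul_le_mul_left ?_ _
    have hcast : ((2:ℝ≥0∞) ^ L * ENNReal.ofReal K) = ENNReal.ofReal (2 ^ L * K) := by
      rw [ENNReal.ofReal_mul (by positivity), ENNReal.ofReal_pow (by norm_num),
        ENNReal.ofReal_ofNat]
    rw [hcast]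
    calc ENNReal.ofReal (2 ^ L * K) ^ l' ≤ ENNReal.ofReal (2 ^ L * K) ^ L := by
          refine pow_le_pow_right₀ ?_ hl'
          refine ENNReal.one_le_ofReal.2 ?_
          calc (1:ℝ) = 1 * 1 := by ring
            _ ≤ 2 ^ L * K := by
              refine mul_le_mul ?_ hK1 zero_le_one (by positivity)
              exact one_le_pow₀ (by norm_num)
      _ = ENNReal.ofReal G := by
          rw [← ENNReal.ofReal_pow (by positivity), hGdef]
  have hVdiag : ∀ i, i < N → ∀ l',
      V (mom (q i)) l' l' = ENNReal.ofReal (pmfMean (q i)) ^ l' := by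
    intro i hiN l'
    rw [V_diag, mom_one_eq (q i) (hoff i hiN).1 (hoff i hiN).2.2.1]
  intro l
  induction l using Nat.strong_induction_on with
  | _ l ihl =>
  intro hl1 hlL n
  induction n with
  | zero => omega
  | succ n ihn =>
    intro _ hn1N
    have hoffn : IsOffspring (q n) := hoff n (by omega)
    have hmn : 0 < pmfMean (q n) := hoffn.2.2.2
    have comp : mom (envDist q (n + 1)) l
        ≤ ∑ r ∈ Finset.range (l + 1), V (mom (q n)) l r * mom (envDist q n) r := by
      show mom (pgfCompDist (envDist q n) (q n)) l ≤ _
      exact mom_pgfCompDist_le _ _ (envDist_nonneg q n fun i hi k => (hoff i (by omega)).1 k)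
        hoffn.1 (le_of_eq (mom_zero_eq_one _ hoffn.1 hoffn.2.1)) l
    have hSsucc : walkS q (n + 1) = walkS q n + Real.log (pmfMean (q n)) := walkS_succ q n
    have hMsucc : walkM q (n + 1) ≤ walkM q n := walkM_succ_le q n
    have hMS : walkM q (n + 1) ≤ walkS q (n + 1) := walkM_le_walkS q (n + 1) (n + 1) le_rfl
    rcases Nat.eq_zero_or_pos n with rfl | hn
    · -- base case n + 1 = 1
      have hS1 : walkS q 1 = Real.log (pmfMean (q 0)) := by
        rw [hSsucc]
        simp [walkS]
      refine comp.trans ?_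
      have hterm : ∀ r ∈ Finset.range (l + 1),
          V (mom (q 0)) l r * mom (envDist q 0) r
            ≤ (if r = 1 then ENNReal.ofReal G * ENNReal.ofReal (pmfMean (q 0)) else 0) := by
        intro r hr
        rw [mom_envDist_zero]
        rcases Nat.lt_or_ge r 2 with hr2 | hr2
        · interval_cases r
          · rw [if_neg (by omega), V]
            rw [if_neg (by omega)]
            simp
          · rw [if_pos rfl]
            simp only [Nat.descFactorial_one, Nat.cast_one, mul_one]
            exact (hVb 0 (by omega) l 1 hlL).trans (by rw [pow_one])
        · rw [if_neg (by omega), Nat.descFactorial_eq_zero_iff_lt.2 (by omega)]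
          simp
      refine (Finset.sum_le_sum hterm).trans ?_
      rw [Finset.sum_ite_eq' (Finset.range (l + 1)) 1
        (fun _ => ENNReal.ofReal G * ENNReal.ofReal (pmfMean (q 0)))]
      rw [if_pos (by simp only [Finset.mem_range]; omega)]
      rw [← ENNReal.ofReal_mul hG0.le]
      refine ENNReal.ofReal_le_ofReal ?_
      have hm0 : 0 < pmfMean (q 0) := (hoff 0 (by omega)).2.2.2
      have hexp : pmfMean (q 0) ≤ Real.exp (walkS q 1 + ((l:ℝ) - 1) * (walkS q 1 - walkM q 1)) := by
        have h1 : Real.exp (walkS q 1) = pmfMean (q 0) := by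
          rw [hS1, Real.exp_log hm0]
        have h2 : (0:ℝ) ≤ ((l:ℝ) - 1) * (walkS q 1 - walkM q 1) := by
          have hl1' : (1:ℝ) ≤ (l:ℝ) := by exact_mod_cast hl1
          have := walkM_le_walkS q 1 1 le_rfl
          nlinarith
        calc pmfMean (q 0) = Real.exp (walkS q 1) * 1 := by rw [h1, mul_one]
          _ ≤ Real.exp (walkS q 1) * Real.exp (((l:ℝ) - 1) * (walkS q 1 - walkM q 1)) := by
              refine mul_le_mul_of_nonneg_left ?_ (Real.exp_nonneg _)
              calc (1:ℝ) = Real.exp 0 := Real.exp_zero.symm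
                _ ≤ Real.exp (((l:ℝ) - 1) * (walkS q 1 - walkM q 1)) := Real.exp_le_exp.2 h2
          _ = Real.exp (walkS q 1 + ((l:ℝ) - 1) * (walkS q 1 - walkM q 1)) :=
              (Real.exp_add _ _).symm
      have hGle : G ≤ (2 * G) ^ l * (1:ℝ) ^ (l - 1) := by
        rw [one_pow, mul_one]
        calc G ≤ 2 * G := by linarith
          _ = (2 * G) ^ 1 := (pow_one _).symm
          _ ≤ (2 * G) ^ l := pow_le_pow_right₀ (by linarith) hl1
      calc G * pmfMean (q 0)
          ≤ G * Real.exp (walkS q 1 + ((l:ℝ) - 1) * (walkS q 1 - walkM q 1)) :=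
            mul_le_mul_of_nonneg_left hexp hG0.le
        _ ≤ (2 * G) ^ l * (1:ℝ) ^ (l-1)
              * Real.exp (walkS q 1 + ((l:ℝ) - 1) * (walkS q 1 - walkM q 1)) :=
            mul_le_mul_of_nonneg_right hGle (Real.exp_nonneg _)
        _ = (2 * G) ^ l * ((1:ℕ) : ℝ) ^ (l-1)
              * Real.exp (walkS q 1 + ((l:ℝ) - 1) * (walkS q 1 - walkM q 1)) := by norm_num
    · -- inductive step, n ≥ 1
      set m' := pmfMean (q n) with hm'def
      set E := Real.exp (walkS q (n+1) + ((l:ℝ) - 1) * (walkS q (n+1) - walkM q (n+1))) with hEdef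
      have hE0 : 0 < E := Real.exp_pos _
      -- top term
      have htop : V (mom (q n)) l l * mom (envDist q n) l
          ≤ ENNReal.ofReal ((2 * G) ^ l * (n : ℝ) ^ (l - 1) * E) := by
        rw [hVdiag n (by omega) l]
        calc ENNReal.ofReal m' ^ l * mom (envDist q n) l
            ≤ ENNReal.ofReal m' ^ l * ENNReal.ofReal ((2 * G) ^ l * (n : ℝ) ^ (l - 1) *
                Real.exp (walkS q n + ((l : ℝ) - 1) * (walkS q n - walkM q n))) :=
              mul_le_mul_right (ihn hn (by omega)) _
          _ = ENNReal.ofReal (m' ^ l * ((2 * G) ^ l * (n : ℝ) ^ (l - 1) *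
                Real.exp (walkS q n + ((l : ℝ) - 1) * (walkS q n - walkM q n)))) := by
              rw [← ENNReal.ofReal_pow hmn.le, ← ENNReal.ofReal_mul (by positivity)]
          _ ≤ ENNReal.ofReal ((2 * G) ^ l * (n : ℝ) ^ (l - 1) * E) := by
              refine ENNReal.ofReal_le_ofReal ?_
              have hes := exp_step (walkS q n) (walkS q (n+1)) (walkM q n) (walkM q (n+1))
                m' hmn hSsucc hMsucc hMS l l hl1 le_rfl
              calc m' ^ l * ((2 * G) ^ l * (n : ℝ) ^ (l - 1) *
                    Real.exp (walkS q n + ((l : ℝ) - 1) * (walkS q n - walkM q n)))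
                  = (2 * G) ^ l * (n : ℝ) ^ (l - 1) *
                    (m' ^ l * Real.exp (walkS q n + ((l : ℝ) - 1) * (walkS q n - walkM q n))) := by
                    ring
                _ ≤ (2 * G) ^ l * (n : ℝ) ^ (l - 1) * E := by
                    refine mul_le_mul_of_nonneg_left hes (by positivity)
      -- lower terms
      have hlow : ∀ r ∈ Finset.range l,
          V (mom (q n)) l r * mom (envDist q n) r
            ≤ ENNReal.ofReal (if r = 0 then 0 else
                G * (2 * G) ^ r * (n : ℝ) ^ (l - 2) * E) := by
        intro r hr
        simp only [Finset.mem_range] at hr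
        rcases Nat.eq_zero_or_pos r with rfl | hr1
        · rw [if_pos rfl, V, if_neg (by omega)]
          simp
        · rw [if_neg (by omega)]
          have hΦ := ihl r hr hr1 (by omega) n hn (by omega)
          calc V (mom (q n)) l r * mom (envDist q n) r
              ≤ (ENNReal.ofReal G * ENNReal.ofReal m' ^ r) *
                  ENNReal.ofReal ((2 * G) ^ r * (n : ℝ) ^ (r - 1) *
                    Real.exp (walkS q n + ((r : ℝ) - 1) * (walkS q n - walkM q n))) :=
                mul_le_mul' (hVb n (by omega) l r hlL) hΦ
            _ = ENNReal.ofReal (G * m' ^ r * ((2 * G) ^ r * (n : ℝ) ^ (r - 1) *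
                  Real.exp (walkS q n + ((r : ℝ) - 1) * (walkS q n - walkM q n)))) := by
                rw [← ENNReal.ofReal_pow hmn.le, ← ENNReal.ofReal_mul (by positivity),
                  ← ENNReal.ofReal_mul (by positivity)]
            _ ≤ ENNReal.ofReal (G * (2 * G) ^ r * (n : ℝ) ^ (l - 2) * E) := by
                refine ENNReal.ofReal_le_ofReal ?_
                have hes := exp_step (walkS q n) (walkS q (n+1)) (walkM q n) (walkM q (n+1))
                  m' hmn hSsucc hMsucc hMS l r hr1 (by omega)
                have hnpow : (n : ℝ) ^ (r - 1) ≤ (n : ℝ) ^ (l - 2) := by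
                  refine pow_le_pow_right₀ (by exact_mod_cast hn) (by omega)
                calc G * m' ^ r * ((2 * G) ^ r * (n : ℝ) ^ (r - 1) *
                      Real.exp (walkS q n + ((r : ℝ) - 1) * (walkS q n - walkM q n)))
                    = G * (2 * G) ^ r * (n : ℝ) ^ (r - 1) *
                      (m' ^ r * Real.exp (walkS q n + ((r : ℝ) - 1) * (walkS q n - walkM q n))) := by
                      ring
                  _ ≤ G * (2 * G) ^ r * (n : ℝ) ^ (r - 1) * E :=
                      mul_le_mul_of_nonneg_left hes (by positivity)
                  _ ≤ G * (2 * G) ^ r * (n : ℝ) ^ (l - 2) * E := by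
                      have : (0:ℝ) ≤ G * (2 * G) ^ r := by positivity
                      nlinarith [hE0.le, mul_le_mul_of_nonneg_left hnpow this]
      -- combine
      refine comp.trans ?_
      rw [Finset.sum_range_succ]
      calc (∑ r ∈ Finset.range l, V (mom (q n)) l r * mom (envDist q n) r)
            + V (mom (q n)) l l * mom (envDist q n) l
          ≤ (∑ r ∈ Finset.range l, ENNReal.ofReal (if r = 0 then 0 else
                G * (2 * G) ^ r * (n : ℝ) ^ (l - 2) * E))
              + ENNReal.ofReal ((2 * G) ^ l * (n : ℝ) ^ (l - 1) * E) :=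
            add_le_add (Finset.sum_le_sum hlow) htop
        _ = ENNReal.ofReal ((∑ r ∈ Finset.range l, (if r = 0 then 0 else
                G * (2 * G) ^ r * (n : ℝ) ^ (l - 2) * E))
              + (2 * G) ^ l * (n : ℝ) ^ (l - 1) * E) := by
            rw [ENNReal.ofReal_add ?_ (by positivity)]
            · rw [ENNReal.ofReal_sum_of_nonneg]
              intro r _
              split
              · exact le_refl _
              · positivity
            · refine Finset.sum_nonneg fun r _ => ?_
              split
              · exact le_refl _
              · positivity
        _ ≤ ENNReal.ofReal ((2 * G) ^ l * ((n : ℝ) + 1) ^ (l - 1) * E) := by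
            refine ENNReal.ofReal_le_ofReal ?_
            have hsum_b : (∑ r ∈ Finset.range l, (if r = 0 then 0 else
                G * (2 * G) ^ r * (n : ℝ) ^ (l - 2) * E))
                ≤ (2 * G) ^ l * (n : ℝ) ^ (l - 2) * E := by
              have h1 : ∀ r ∈ Finset.range l, (if r = 0 then 0 else
                  G * (2 * G) ^ r * (n : ℝ) ^ (l - 2) * E)
                  ≤ (2 * G) ^ r * (G * (n : ℝ) ^ (l - 2) * E) := by
                intro r _
                split
                · positivity
                · exact le_of_eq (by ring)
              refine (Finset.sum_le_sum h1).trans ?_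
              rw [← Finset.sum_mul]
              have h2 : ∑ r ∈ Finset.range l, (2 * G) ^ r ≤ 2 * (2 * G) ^ (l - 1) :=
                geom_bound (2 * G) (by linarith) l hl1
              calc (∑ r ∈ Finset.range l, (2 * G) ^ r) * (G * (n : ℝ) ^ (l - 2) * E)
                  ≤ 2 * (2 * G) ^ (l - 1) * (G * (n : ℝ) ^ (l - 2) * E) := by
                    refine mul_le_mul_of_nonneg_right h2 (by positivity)
                _ = (2 * G) ^ (l - 1) * (2 * G) * ((n : ℝ) ^ (l - 2) * E) := by ring
                _ = (2 * G) ^ l * ((n : ℝ) ^ (l - 2) * E) := by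
                    rw [← pow_succ]
                    congr 2
                    omega
                _ = (2 * G) ^ l * (n : ℝ) ^ (l - 2) * E := by ring
            rcases Nat.eq_or_lt_of_le hl1 with hl1' | hl2
            · -- l = 1 : no lower terms
              have : l = 1 := hl1'.symm
              subst this
              simp only [Finset.range_one, Finset.sum_singleton, if_pos rfl, zero_add]
              norm_num
            · -- l ≥ 2
              have hps := pow_step n hn (l - 1) (by omega)
              have hl21 : l - 1 - 1 = l - 2 := by omega
              rw [hl21] at hps
              calc (∑ r ∈ Finset.range l, (if r = 0 then 0 else
                    G * (2 * G) ^ r * (n : ℝ) ^ (l - 2) * E))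
                    + (2 * G) ^ l * (n : ℝ) ^ (l - 1) * E
                  ≤ (2 * G) ^ l * (n : ℝ) ^ (l - 2) * E
                    + (2 * G) ^ l * (n : ℝ) ^ (l - 1) * E := by linarith
                _ = (2 * G) ^ l * (((n:ℝ) ^ (l - 1) + (n:ℝ) ^ (l - 2)) * E) := by ring
                _ ≤ (2 * G) ^ l * (((n:ℝ) + 1) ^ (l - 1) * E) := by
                    refine mul_le_mul_of_nonneg_left ?_ (by positivity)
                    exact mul_le_mul_of_nonneg_right hps hE0.le
                _ = (2 * G) ^ l * ((n : ℝ) + 1) ^ (l - 1) * E := by ring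
        _ = ENNReal.ofReal ((2 * G) ^ l * (((n : ℕ) + 1 : ℕ) : ℝ) ^ (l - 1) * E) := by
            push_cast
            ring_nf

end FMBaux


/-- for `β > 2` and `d > 0` there is `c = c(β,d) < ∞` such that for every
`n ≥ 1`, every tuple satisfying `H(β,d)` and every `1 ≤ l ≤ ⌈β⌉ - 1`, the `l`-th factorial
moment `F^{(l)}(1) = ∑_j j(j-1)⋯(j-l+1) P_j` of the composed distribution satisfies
`F^{(l)}(1) ≤ c n^{l-1} e^{S_n} e^{(l-1)(S_n - M_n)}` (in particular it is finite). -/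
theorem factorial_moment_bound (β d : ℝ) (hβ : 2 < β) (hd : 0 < d) :
    ∃ c : ℝ, 0 < c ∧ ∀ n : ℕ, 1 ≤ n → ∀ q : ℕ → ℕ → ℝ,
      (∀ i < n, IsOffspring (q i)) → (∀ i < n, TailCond β d (q i)) →
      ∀ l : ℕ, 1 ≤ l → l ≤ ⌈β⌉₊ - 1 →
        (∑' j : ℕ, ENNReal.ofReal
            ((∏ i ∈ Finset.range l, ((j : ℝ) - i)) * envDist q n j)) ≤
          ENNReal.ofReal (c * (n : ℝ) ^ (l - 1) * Real.exp (walkS q n) *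
            Real.exp (((l : ℝ) - 1) * (walkS q n - walkM q n))) := by
  classical
  set L : ℕ := ⌈β⌉₊ - 1 with hLdef
  have hceil : 3 ≤ ⌈β⌉₊ := by
    have h := Nat.lt_ceil.2 (by exact_mod_cast hβ : ((2:ℕ) : ℝ) < β)
    omega
  have hL2 : 2 ≤ L := by omega
  have hLβ : (L : ℝ) < β := by
    have h1 : (⌈β⌉₊ : ℝ) < β + 1 := Nat.ceil_lt_add_one (by linarith)
    have h2 : (L : ℝ) = (⌈β⌉₊ : ℝ) - 1 := by
      rw [hLdef, Nat.cast_sub (by omega)]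
      norm_num
    linarith
  set Z : ℝ := ∑' i : ℕ, (i : ℝ) ^ ((L : ℝ) - 1 - β) with hZdef
  set K : ℝ := max 1 ((L : ℝ) * (d * Z)) with hKdef
  set G : ℝ := (2 ^ L * K) ^ L with hGdef
  have hK1 : (1 : ℝ) ≤ K := le_max_left _ _
  have hG1 : (1 : ℝ) ≤ G := by
    rw [hGdef]
    refine one_le_pow₀ ?_
    calc (1:ℝ) = 1 * 1 := by ring
      _ ≤ 2 ^ L * K := mul_le_mul (one_le_pow₀ (by norm_num)) hK1 zero_le_one (by positivity)
  refine ⟨(2 * G) ^ L, by positivity, ?_⟩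
  intro n hn q hoff htail l hl1 hlL
  have hLHS : (∑' j : ℕ, ENNReal.ofReal
      ((∏ i ∈ Finset.range l, ((j : ℝ) - i)) * envDist q n j)) = FMBaux.mom (envDist q n) l := by
    refine tsum_congr fun j => ?_
    rw [FMBaux.prod_cast_descFactorial, ENNReal.ofReal_mul (by positivity),
      ENNReal.ofReal_natCast]
  calc (∑' j : ℕ, ENNReal.ofReal
        ((∏ i ∈ Finset.range l, ((j : ℝ) - i)) * envDist q n j))
      = FMBaux.mom (envDist q n) l := hLHS
    _ ≤ ENNReal.ofReal ((2 * G) ^ l * (n : ℝ) ^ (l - 1) *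
          Real.exp (walkS q n + ((l : ℝ) - 1) * (walkS q n - walkM q n))) :=
        FMBaux.main_aux β d hd L hL2 hLβ K hK1 (le_max_right _ _) G hGdef q n hoff htail
          l hl1 hlL n hn le_rfl
    _ ≤ ENNReal.ofReal ((2 * G) ^ L * (n : ℝ) ^ (l - 1) * Real.exp (walkS q n) *
          Real.exp (((l : ℝ) - 1) * (walkS q n - walkM q n))) := by
        refine ENNReal.ofReal_le_ofReal ?_
        rw [Real.exp_add]
        have hpow : (2 * G) ^ l ≤ (2 * G) ^ L := pow_le_pow_right₀ (by linarith) hlL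
        have h0 : (0:ℝ) ≤ (n : ℝ) ^ (l - 1) * (Real.exp (walkS q n) *
            Real.exp (((l : ℝ) - 1) * (walkS q n - walkM q n))) := by positivity
        calc (2 * G) ^ l * (n : ℝ) ^ (l - 1) *
              (Real.exp (walkS q n) * Real.exp (((l : ℝ) - 1) * (walkS q n - walkM q n)))
            = (2 * G) ^ l * ((n : ℝ) ^ (l - 1) * (Real.exp (walkS q n) *
                Real.exp (((l : ℝ) - 1) * (walkS q n - walkM q n)))) := by ring
          _ ≤ (2 * G) ^ L * ((n : ℝ) ^ (l - 1) * (Real.exp (walkS q n) *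
                Real.exp (((l : ℝ) - 1) * (walkS q n - walkM q n)))) :=
              mul_le_mul_of_nonneg_right hpow h0
          _ = (2 * G) ^ L * (n : ℝ) ^ (l - 1) * Real.exp (walkS q n) *
                Real.exp (((l : ℝ) - 1) * (walkS q n - walkM q n)) := by ring
end
end

section
/- The function ψ is convex on [0,∞), satisfies ψ(0)=γ, ψ(θ)≤Λ(θ) for every θ≥0, and ψ(θ+x)≤ψ(θ)+βx for all θ,x≥0. -/
open Set ENNReal NNReal

noncomputable section

/-- The rate function `ψ(θ) = min( γ + βθ ,
inf_{t ∈ [0,1), s ∈ [0,θ]} { tγ + βs + (1-t) Λ((θ-s)/(1-t)) } )`. -/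
def psiFun (γ β : ℝ) (Λ : ℝ → ℝ≥0∞) (θ : ℝ) : ℝ≥0∞ :=
  min (ENNReal.ofReal (γ + β * θ))
    (⨅ t ∈ Ico (0 : ℝ) 1, ⨅ s ∈ Icc (0 : ℝ) θ,
      ENNReal.ofReal (t * γ + β * s) + ENNReal.ofReal (1 - t) * Λ ((θ - s) / (1 - t)))

/-- auxiliary integrand -/
def Ffun (γ β : ℝ) (Λ : ℝ → ℝ≥0∞) (θ t s : ℝ) : ℝ≥0∞ :=
  ENNReal.ofReal (t * γ + β * s) + ENNReal.ofReal (1 - t) * Λ ((θ - s) / (1 - t))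

lemma psiFun_eq (γ β : ℝ) (Λ : ℝ → ℝ≥0∞) (θ : ℝ) :
    psiFun γ β Λ θ = min (ENNReal.ofReal (γ + β * θ))
      (⨅ t ∈ Ico (0 : ℝ) 1, ⨅ s ∈ Icc (0 : ℝ) θ, Ffun γ β Λ θ t s) := rfl

lemma psiFun_le_line (γ β : ℝ) (Λ : ℝ → ℝ≥0∞) (θ : ℝ) :
    psiFun γ β Λ θ ≤ ENNReal.ofReal (γ + β * θ) := min_le_left _ _

lemma psiFun_le_F (γ β : ℝ) (Λ : ℝ → ℝ≥0∞) {θ t s : ℝ}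
    (ht : t ∈ Ico (0 : ℝ) 1) (hs : s ∈ Icc (0 : ℝ) θ) :
    psiFun γ β Λ θ ≤ Ffun γ β Λ θ t s := by
  refine (min_le_right _ _).trans ?_
  exact (iInf₂_le t ht).trans (iInf₂_le s hs)

lemma mul_iInf_prop {c : ℝ≥0∞} (hc0 : c ≠ 0) (hct : c ≠ ∞) {ι : Sort*} (f : ι → ℝ≥0∞) :
    c * ⨅ i, f i = ⨅ i, c * f i :=
  ENNReal.mul_iInf' (fun h => absurd h hct) (fun h => absurd h hc0)

section main

variable {Λ : ℝ → ℝ≥0∞} {γ β : ℝ}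

/-- Combining two interior points. -/
lemma psi_le_FF (hΛ : ConvexOn ℝ≥0 (Ici (0 : ℝ)) Λ) (hγ0 : 0 ≤ γ) (hβ : 0 < β)
    {θ₁ θ₂ t₁ t₂ s₁ s₂ : ℝ}
    (ht₁ : t₁ ∈ Ico (0 : ℝ) 1) (ht₂ : t₂ ∈ Ico (0 : ℝ) 1)
    (hs₁ : s₁ ∈ Icc (0 : ℝ) θ₁) (hs₂ : s₂ ∈ Icc (0 : ℝ) θ₂)
    {a b : ℝ≥0} (hab : a + b = 1) :
    psiFun γ β Λ ((a : ℝ) * θ₁ + (b : ℝ) * θ₂) ≤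
      a • Ffun γ β Λ θ₁ t₁ s₁ + b • Ffun γ β Λ θ₂ t₂ s₂ := by
  have hab' : (a : ℝ) + (b : ℝ) = 1 := by exact_mod_cast congrArg (NNReal.toReal) hab
  have ha0 := a.coe_nonneg
  have hb0 := b.coe_nonneg
  have h1t₁ : (0:ℝ) < 1 - t₁ := by linarith [ht₁.2]
  have h1t₂ : (0:ℝ) < 1 - t₂ := by linarith [ht₂.2]
  have h1t : 1 - ((a:ℝ) * t₁ + (b:ℝ) * t₂) = (a:ℝ) * (1 - t₁) + (b:ℝ) * (1 - t₂) := by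
    linear_combination (-1 : ℝ) * hab'
  have hpos : (0:ℝ) < 1 - ((a:ℝ) * t₁ + (b:ℝ) * t₂) := by
    rw [h1t]
    rcases eq_zero_or_pos a with rfl | hapos
    · obtain rfl : b = 1 := by simpa using hab
      simpa using h1t₂
    · have h1 := mul_pos (show (0:ℝ) < a from hapos) h1t₁
      have h2 := mul_nonneg hb0 h1t₂.le
      linarith
  have ht : (a:ℝ) * t₁ + (b:ℝ) * t₂ ∈ Ico (0:ℝ) 1 := by
    constructor
    · exact add_nonneg (mul_nonneg ha0 ht₁.1) (mul_nonneg hb0 ht₂.1)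
    · linarith
  have hs : (a:ℝ) * s₁ + (b:ℝ) * s₂ ∈ Icc (0:ℝ) ((a:ℝ) * θ₁ + (b:ℝ) * θ₂) := by
    constructor
    · exact add_nonneg (mul_nonneg ha0 hs₁.1) (mul_nonneg hb0 hs₂.1)
    · exact add_le_add (mul_le_mul_of_nonneg_left hs₁.2 ha0)
        (mul_le_mul_of_nonneg_left hs₂.2 hb0)
  refine (psiFun_le_F γ β Λ ht hs).trans ?_
  -- abbreviations
  set u₁ : ℝ := (θ₁ - s₁) / (1 - t₁) with hu₁def
  set u₂ : ℝ := (θ₂ - s₂) / (1 - t₂) with hu₂def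
  have hu₁0 : 0 ≤ u₁ := div_nonneg (by linarith [hs₁.2]) h1t₁.le
  have hu₂0 : 0 ≤ u₂ := div_nonneg (by linarith [hs₂.2]) h1t₂.le
  have hcR0 : (0:ℝ) ≤ (a:ℝ) * (1 - t₁) / (1 - ((a:ℝ) * t₁ + (b:ℝ) * t₂)) :=
    div_nonneg (mul_nonneg ha0 h1t₁.le) hpos.le
  have hdR0 : (0:ℝ) ≤ (b:ℝ) * (1 - t₂) / (1 - ((a:ℝ) * t₁ + (b:ℝ) * t₂)) :=
    div_nonneg (mul_nonneg hb0 h1t₂.le) hpos.le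
  set c : ℝ≥0 := ⟨_, hcR0⟩ with hcdef
  set d : ℝ≥0 := ⟨_, hdR0⟩ with hddef
  have hcd : c + d = 1 := by
    rw [← NNReal.coe_inj]
    push_cast [hcdef, hddef]
    show (a:ℝ) * (1 - t₁) / (1 - ((a:ℝ) * t₁ + (b:ℝ) * t₂)) + (b:ℝ) * (1 - t₂) / (1 - ((a:ℝ) * t₁ + (b:ℝ) * t₂)) = 1
    rw [← add_div, ← h1t, div_self hpos.ne']
  have hconv := hΛ.2 (mem_Ici.2 hu₁0) (mem_Ici.2 hu₂0) (zero_le (a := c)) (zero_le (a := d)) hcd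
  have harg : (((a:ℝ) * θ₁ + (b:ℝ) * θ₂) - ((a:ℝ) * s₁ + (b:ℝ) * s₂)) /
      (1 - ((a:ℝ) * t₁ + (b:ℝ) * t₂)) = c • u₁ + d • u₂ := by
    rw [NNReal.smul_def, NNReal.smul_def, smul_eq_mul, smul_eq_mul]
    show _ = (a:ℝ) * (1 - t₁) / _ * u₁ + (b:ℝ) * (1 - t₂) / _ * u₂
    rw [hu₁def, hu₂def]
    field_simp
    ring
  have hcoe : (c : ℝ≥0∞) = ENNReal.ofReal ((a:ℝ) * (1 - t₁) / (1 - ((a:ℝ) * t₁ + (b:ℝ) * t₂)))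
      := (ENNReal.ofReal_eq_coe_nnreal hcR0).symm
  have hdcoe : (d : ℝ≥0∞) = ENNReal.ofReal ((b:ℝ) * (1 - t₂) / (1 - ((a:ℝ) * t₁ + (b:ℝ) * t₂)))
      := (ENNReal.ofReal_eq_coe_nnreal hdR0).symm
  have hY : ENNReal.ofReal (1 - ((a:ℝ) * t₁ + (b:ℝ) * t₂)) *
      Λ ((((a:ℝ) * θ₁ + (b:ℝ) * θ₂) - ((a:ℝ) * s₁ + (b:ℝ) * s₂)) /
        (1 - ((a:ℝ) * t₁ + (b:ℝ) * t₂)))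
      ≤ (a:ℝ≥0∞) * (ENNReal.ofReal (1 - t₁) * Λ u₁)
        + (b:ℝ≥0∞) * (ENNReal.ofReal (1 - t₂) * Λ u₂) := by
    rw [harg]
    refine (mul_le_mul_right hconv _).trans (le_of_eq ?_)
    rw [mul_add, ENNReal.smul_def, ENNReal.smul_def, smul_eq_mul, smul_eq_mul,
      ← mul_assoc, ← mul_assoc, hcoe, hdcoe,
      ← ENNReal.ofReal_mul (by positivity), ← ENNReal.ofReal_mul (by positivity),
      mul_div_cancel₀ _ hpos.ne', mul_div_cancel₀ _ hpos.ne',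
      ENNReal.ofReal_mul ha0, ENNReal.ofReal_mul hb0,
      ENNReal.ofReal_coe_nnreal, ENNReal.ofReal_coe_nnreal, mul_assoc, mul_assoc]
  have hx1 : (0:ℝ) ≤ t₁ * γ + β * s₁ :=
    add_nonneg (mul_nonneg ht₁.1 hγ0) (mul_nonneg hβ.le hs₁.1)
  have hx2 : (0:ℝ) ≤ t₂ * γ + β * s₂ :=
    add_nonneg (mul_nonneg ht₂.1 hγ0) (mul_nonneg hβ.le hs₂.1)
  have hX : ENNReal.ofReal (((a:ℝ) * t₁ + (b:ℝ) * t₂) * γ +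
      β * ((a:ℝ) * s₁ + (b:ℝ) * s₂))
      = (a:ℝ≥0∞) * ENNReal.ofReal (t₁ * γ + β * s₁)
        + (b:ℝ≥0∞) * ENNReal.ofReal (t₂ * γ + β * s₂) := by
    rw [show ((a:ℝ) * t₁ + (b:ℝ) * t₂) * γ + β * ((a:ℝ) * s₁ + (b:ℝ) * s₂)
      = (a:ℝ) * (t₁ * γ + β * s₁) + (b:ℝ) * (t₂ * γ + β * s₂) from by ring,
      ENNReal.ofReal_add (mul_nonneg ha0 hx1) (mul_nonneg hb0 hx2),
      ENNReal.ofReal_mul ha0, ENNReal.ofReal_mul hb0,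
      ENNReal.ofReal_coe_nnreal, ENNReal.ofReal_coe_nnreal]
  simp only [Ffun, ENNReal.smul_def, smul_eq_mul]
  calc ENNReal.ofReal (((a:ℝ) * t₁ + (b:ℝ) * t₂) * γ + β * ((a:ℝ) * s₁ + (b:ℝ) * s₂))
        + ENNReal.ofReal (1 - ((a:ℝ) * t₁ + (b:ℝ) * t₂)) *
          Λ ((((a:ℝ) * θ₁ + (b:ℝ) * θ₂) - ((a:ℝ) * s₁ + (b:ℝ) * s₂)) /
            (1 - ((a:ℝ) * t₁ + (b:ℝ) * t₂)))
      ≤ ((a:ℝ≥0∞) * ENNReal.ofReal (t₁ * γ + β * s₁)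
          + (b:ℝ≥0∞) * ENNReal.ofReal (t₂ * γ + β * s₂))
        + ((a:ℝ≥0∞) * (ENNReal.ofReal (1 - t₁) * Λ u₁)
          + (b:ℝ≥0∞) * (ENNReal.ofReal (1 - t₂) * Λ u₂)) :=
        add_le_add (le_of_eq hX) hY
    _ = (a:ℝ≥0∞) * (ENNReal.ofReal (t₁ * γ + β * s₁) + ENNReal.ofReal (1 - t₁) * Λ u₁)
        + (b:ℝ≥0∞) * (ENNReal.ofReal (t₂ * γ + β * s₂) + ENNReal.ofReal (1 - t₂) * Λ u₂) := by
        ring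

/-- Combining a line point with an interior point. -/
lemma psi_le_LF (hγ0 : 0 ≤ γ) (hβ : 0 < β)
    {θ₁ θ₂ t₂ s₂ : ℝ} (hθ₁ : 0 ≤ θ₁)
    (ht₂ : t₂ ∈ Ico (0 : ℝ) 1) (hs₂ : s₂ ∈ Icc (0 : ℝ) θ₂)
    {a b : ℝ≥0} (hab : a + b = 1) (hb : 0 < b) :
    psiFun γ β Λ ((a : ℝ) * θ₁ + (b : ℝ) * θ₂) ≤
      a • ENNReal.ofReal (γ + β * θ₁) + b • Ffun γ β Λ θ₂ t₂ s₂ := by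
  have hab' : (a : ℝ) + (b : ℝ) = 1 := by exact_mod_cast congrArg (NNReal.toReal) hab
  have hbR : (0:ℝ) < b := hb
  have h1t₂ : (0:ℝ) < 1 - t₂ := by linarith [ht₂.2]
  have h1t : 1 - ((a:ℝ) + (b:ℝ) * t₂) = (b:ℝ) * (1 - t₂) := by
    linear_combination (-1 : ℝ) * hab'
  have ht : (a:ℝ) + (b:ℝ) * t₂ ∈ Ico (0:ℝ) 1 := by
    constructor
    · exact add_nonneg a.coe_nonneg (mul_nonneg b.coe_nonneg ht₂.1)
    · nlinarith [mul_pos hbR h1t₂]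
  have hs : (a:ℝ) * θ₁ + (b:ℝ) * s₂ ∈ Icc (0:ℝ) ((a:ℝ) * θ₁ + (b:ℝ) * θ₂) := by
    constructor
    · exact add_nonneg (mul_nonneg a.coe_nonneg hθ₁) (mul_nonneg b.coe_nonneg hs₂.1)
    · exact add_le_add le_rfl (mul_le_mul_of_nonneg_left hs₂.2 b.coe_nonneg)
  refine (psiFun_le_F γ β Λ ht hs).trans (le_of_eq ?_)
  have harg : (((a:ℝ) * θ₁ + (b:ℝ) * θ₂) - ((a:ℝ) * θ₁ + (b:ℝ) * s₂)) /
      (1 - ((a:ℝ) + (b:ℝ) * t₂)) = (θ₂ - s₂) / (1 - t₂) := by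
    rw [h1t, show ((a:ℝ) * θ₁ + (b:ℝ) * θ₂) - ((a:ℝ) * θ₁ + (b:ℝ) * s₂)
      = (b:ℝ) * (θ₂ - s₂) from by ring, mul_div_mul_left _ _ (ne_of_gt hbR)]
  have hofr : ((a:ℝ) + (b:ℝ) * t₂) * γ + β * ((a:ℝ) * θ₁ + (b:ℝ) * s₂)
      = (a:ℝ) * (γ + β * θ₁) + (b:ℝ) * (t₂ * γ + β * s₂) := by ring
  have hx1 : (0:ℝ) ≤ γ + β * θ₁ := add_nonneg hγ0 (mul_nonneg hβ.le hθ₁)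
  have hx2 : (0:ℝ) ≤ t₂ * γ + β * s₂ :=
    add_nonneg (mul_nonneg ht₂.1 hγ0) (mul_nonneg hβ.le hs₂.1)
  simp only [Ffun]
  rw [harg, hofr, ENNReal.ofReal_add (mul_nonneg a.coe_nonneg hx1)
      (mul_nonneg b.coe_nonneg hx2), ENNReal.ofReal_mul a.coe_nonneg,
    ENNReal.ofReal_mul b.coe_nonneg, ENNReal.ofReal_coe_nnreal, ENNReal.ofReal_coe_nnreal,
    h1t, ENNReal.ofReal_mul b.coe_nonneg, ENNReal.ofReal_coe_nnreal,
    ENNReal.smul_def, ENNReal.smul_def, smul_eq_mul, smul_eq_mul]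
  ring

/-- Combining two line points. -/
lemma psi_le_LL (hγ0 : 0 ≤ γ) (hβ : 0 < β) {θ₁ θ₂ : ℝ} (hθ₁ : 0 ≤ θ₁) (hθ₂ : 0 ≤ θ₂)
    {a b : ℝ≥0} (hab : a + b = 1) :
    psiFun γ β Λ ((a : ℝ) * θ₁ + (b : ℝ) * θ₂) ≤
      a • ENNReal.ofReal (γ + β * θ₁) + b • ENNReal.ofReal (γ + β * θ₂) := by
  have hab' : (a : ℝ) + (b : ℝ) = 1 := by exact_mod_cast congrArg (NNReal.toReal) hab
  have h1 : γ + β * ((a : ℝ) * θ₁ + (b : ℝ) * θ₂)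
      = (a : ℝ) * (γ + β * θ₁) + (b : ℝ) * (γ + β * θ₂) := by
    linear_combination (-γ : ℝ) * hab'
  have hx1 : (0:ℝ) ≤ γ + β * θ₁ := add_nonneg hγ0 (mul_nonneg hβ.le hθ₁)
  have hx2 : (0:ℝ) ≤ γ + β * θ₂ := add_nonneg hγ0 (mul_nonneg hβ.le hθ₂)
  refine (psiFun_le_line γ β Λ _).trans_eq ?_
  rw [h1, ENNReal.ofReal_add (mul_nonneg a.coe_nonneg hx1) (mul_nonneg b.coe_nonneg hx2),
    ENNReal.ofReal_mul a.coe_nonneg, ENNReal.ofReal_mul b.coe_nonneg,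
    ENNReal.ofReal_coe_nnreal, ENNReal.ofReal_coe_nnreal, ENNReal.smul_def,
    ENNReal.smul_def, smul_eq_mul, smul_eq_mul]

lemma psi_le_LB (hγ0 : 0 ≤ γ) (hβ : 0 < β) {θ₁ θ₂ : ℝ} (hθ₁ : 0 ≤ θ₁)
    {a b : ℝ≥0} (hab : a + b = 1) (hb : 0 < b) :
    psiFun γ β Λ ((a : ℝ) * θ₁ + (b : ℝ) * θ₂) ≤
      a • ENNReal.ofReal (γ + β * θ₁) +
        b • (⨅ t ∈ Ico (0 : ℝ) 1, ⨅ s ∈ Icc (0 : ℝ) θ₂, Ffun γ β Λ θ₂ t s) := by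
  have hbne : (b : ℝ≥0∞) ≠ 0 := by exact_mod_cast hb.ne'
  simp only [ENNReal.smul_def, smul_eq_mul]
  simp only [mul_iInf_prop hbne ENNReal.coe_ne_top, ENNReal.add_iInf]
  refine le_iInf fun t₂ => le_iInf fun ht₂ => le_iInf fun s₂ => le_iInf fun hs₂ => ?_
  have h := psi_le_LF (Λ := Λ) hγ0 hβ hθ₁ ht₂ hs₂ hab hb
  simpa only [ENNReal.smul_def, smul_eq_mul] using h

lemma psi_le_BB (hΛ : ConvexOn ℝ≥0 (Ici (0 : ℝ)) Λ) (hγ0 : 0 ≤ γ) (hβ : 0 < β)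
    {θ₁ θ₂ : ℝ} {a b : ℝ≥0} (hab : a + b = 1) (ha : 0 < a) (hb : 0 < b) :
    psiFun γ β Λ ((a : ℝ) * θ₁ + (b : ℝ) * θ₂) ≤
      a • (⨅ t ∈ Ico (0 : ℝ) 1, ⨅ s ∈ Icc (0 : ℝ) θ₁, Ffun γ β Λ θ₁ t s) +
        b • (⨅ t ∈ Ico (0 : ℝ) 1, ⨅ s ∈ Icc (0 : ℝ) θ₂, Ffun γ β Λ θ₂ t s) := by
  have hane : (a : ℝ≥0∞) ≠ 0 := by exact_mod_cast ha.ne'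
  have hbne : (b : ℝ≥0∞) ≠ 0 := by exact_mod_cast hb.ne'
  simp only [ENNReal.smul_def, smul_eq_mul]
  simp only [mul_iInf_prop hane ENNReal.coe_ne_top, mul_iInf_prop hbne ENNReal.coe_ne_top,
    ENNReal.iInf_add, ENNReal.add_iInf]
  refine le_iInf fun t₁ => le_iInf fun ht₁ => le_iInf fun s₁ => le_iInf fun hs₁ => ?_
  refine le_iInf fun t₂ => le_iInf fun ht₂ => le_iInf fun s₂ => le_iInf fun hs₂ => ?_
  have h := psi_le_FF hΛ hγ0 hβ ht₂ ht₁ hs₂ hs₁ hab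
  simpa only [ENNReal.smul_def, smul_eq_mul] using h

end main

/-- `ψ` is convex on `[0,∞)`, satisfies `ψ(0) = γ`, `ψ(θ) ≤ Λ(θ)` for every
`θ ≥ 0`, and `ψ(θ + x) ≤ ψ(θ) + βx` for all `θ, x ≥ 0`. -/
theorem psiFun_properties (Λ : ℝ → ℝ≥0∞) (hΛ : ConvexOn ℝ≥0 (Ici (0 : ℝ)) Λ)
    (γ β : ℝ) (hγ0 : 0 ≤ γ) (hγΛ : ENNReal.ofReal γ ≤ Λ 0) (hβ : 0 < β) :
    ConvexOn ℝ≥0 (Ici (0 : ℝ)) (psiFun γ β Λ) ∧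
    psiFun γ β Λ 0 = ENNReal.ofReal γ ∧
    (∀ θ : ℝ, 0 ≤ θ → psiFun γ β Λ θ ≤ Λ θ) ∧
    (∀ θ x : ℝ, 0 ≤ θ → 0 ≤ x →
      psiFun γ β Λ (θ + x) ≤ psiFun γ β Λ θ + ENNReal.ofReal (β * x)) := by
  refine ⟨⟨convex_Ici 0, ?_⟩, ?_, ?_, ?_⟩
  · -- convexity inequality
    intro θ₁ h₁ θ₂ h₂ a b _ _ hab
    rcases eq_zero_or_pos a with rfl | ha
    · obtain rfl : b = 1 := by simpa using hab
      simp
    rcases eq_zero_or_pos b with rfl | hb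
    · obtain rfl : a = 1 := by simpa using hab
      simp
    have hsm : a • θ₁ + b • θ₂ = (a : ℝ) * θ₁ + (b : ℝ) * θ₂ := by
      rw [NNReal.smul_def, NNReal.smul_def, smul_eq_mul, smul_eq_mul]
    rw [hsm, psiFun_eq γ β Λ θ₁, psiFun_eq γ β Λ θ₂]
    rcases min_cases (ENNReal.ofReal (γ + β * θ₁))
        (⨅ t ∈ Ico (0 : ℝ) 1, ⨅ s ∈ Icc (0 : ℝ) θ₁, Ffun γ β Λ θ₁ t s) with ⟨e₁, -⟩ | ⟨e₁, -⟩ <;>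
      rcases min_cases (ENNReal.ofReal (γ + β * θ₂))
        (⨅ t ∈ Ico (0 : ℝ) 1, ⨅ s ∈ Icc (0 : ℝ) θ₂, Ffun γ β Λ θ₂ t s) with ⟨e₂, -⟩ | ⟨e₂, -⟩ <;>
      rw [e₁, e₂]
    · exact psi_le_LL hγ0 hβ h₁ h₂ hab
    · exact psi_le_LB hγ0 hβ h₁ hab hb
    · rw [show (a : ℝ) * θ₁ + (b : ℝ) * θ₂ = (b : ℝ) * θ₂ + (a : ℝ) * θ₁ from by ring,
        add_comm (a • _)]
      exact psi_le_LB hγ0 hβ h₂ (by rw [add_comm]; exact hab) ha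
    · exact psi_le_BB hΛ hγ0 hβ hab ha hb
  · -- value at 0
    rw [psiFun_eq]
    refine le_antisymm ((min_le_left _ _).trans_eq (by norm_num)) ?_
    refine le_min (by norm_num) (le_iInf₂ fun t ht => le_iInf₂ fun s hs => ?_)
    obtain rfl : s = 0 := le_antisymm hs.2 hs.1
    have h1t : (0:ℝ) ≤ 1 - t := by linarith [ht.2]
    simp only [Ffun]
    calc ENNReal.ofReal γ = ENNReal.ofReal (t * γ + (1 - t) * γ) := by
          rw [show t * γ + (1 - t) * γ = γ from by ring]
      _ = ENNReal.ofReal (t * γ) + ENNReal.ofReal ((1 - t) * γ) :=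
          ENNReal.ofReal_add (mul_nonneg ht.1 hγ0) (mul_nonneg h1t hγ0)
      _ = ENNReal.ofReal (t * γ) + ENNReal.ofReal (1 - t) * ENNReal.ofReal γ := by
          rw [ENNReal.ofReal_mul h1t]
      _ ≤ ENNReal.ofReal (t * γ + β * 0) + ENNReal.ofReal (1 - t) * Λ ((0 - 0) / (1 - t)) := by
          simp only [mul_zero, add_zero, sub_zero, zero_div, sub_self]
          exact add_le_add_right (mul_le_mul_right hγΛ _) _
  · -- below Λ
    intro θ hθ
    have h := psiFun_le_F γ β Λ (t := 0) (s := 0)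
      ⟨le_refl 0, zero_lt_one⟩ ⟨le_refl 0, hθ⟩
    simpa [Ffun] using h
  · -- Lipschitz-type bound
    intro θ x hθ hx
    rw [psiFun_eq γ β Λ θ]
    rcases min_cases (ENNReal.ofReal (γ + β * θ))
        (⨅ t ∈ Ico (0 : ℝ) 1, ⨅ s ∈ Icc (0 : ℝ) θ, Ffun γ β Λ θ t s) with ⟨e, -⟩ | ⟨e, -⟩ <;>
      rw [e]
    · refine (psiFun_le_line γ β Λ _).trans_eq ?_
      rw [show γ + β * (θ + x) = (γ + β * θ) + β * x from by ring,
        ENNReal.ofReal_add (add_nonneg hγ0 (mul_nonneg hβ.le hθ)) (mul_nonneg hβ.le hx)]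
    · simp only [ENNReal.iInf_add]
      refine le_iInf fun t => le_iInf fun ht => le_iInf fun s => le_iInf fun hs => ?_
      have hts : s + x ∈ Icc (0:ℝ) (θ + x) := ⟨add_nonneg hs.1 hx, add_le_add hs.2 le_rfl⟩
      refine (psiFun_le_F γ β Λ ht hts).trans (le_of_eq ?_)
      simp only [Ffun]
      rw [show (θ + x) - (s + x) = θ - s from by ring,
        show t * γ + β * (s + x) = (t * γ + β * s) + β * x from by ring,
        ENNReal.ofReal_add (add_nonneg (mul_nonneg ht.1 hγ0) (mul_nonneg hβ.le hs.1))
          (mul_nonneg hβ.le hx)]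
      ring
end
end

section
/- If κ:[0,∞)→[0,∞) is a convex function with κ(0)≤γ, κ(θ)≤Λ(θ) for every θ≥0, and κ(θ+x)≤κ(θ)+βx for all θ,x≥0, then κ(θ)≤ψ(θ) for every θ≥0. In particular, ψ is the largest convex function satisfying these three properties. -/
open Set ENNReal NNReal

noncomputable section

/-- if `κ : [0,∞) → [0,∞)` is convex with `κ(0) ≤ γ`, `κ(θ) ≤ Λ(θ)` for every
`θ ≥ 0` and `κ(θ + x) ≤ κ(θ) + βx` for all `θ, x ≥ 0`, then `κ ≤ ψ` on `[0,∞)`;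
in particular `ψ` is the largest convex function with these three properties. -/
theorem psiFun_largest (Λ : ℝ → ℝ≥0∞) (hΛ : ConvexOn ℝ≥0 (Ici (0 : ℝ)) Λ)
    (γ β : ℝ) (hγ0 : 0 ≤ γ) (hγΛ : ENNReal.ofReal γ ≤ Λ 0) (hβ : 0 < β)
    (κ : ℝ → ℝ) (hκconv : ConvexOn ℝ (Ici (0 : ℝ)) κ)
    (hκ0 : ∀ θ : ℝ, 0 ≤ θ → 0 ≤ κ θ)
    (hκγ : κ 0 ≤ γ)
    (hκΛ : ∀ θ : ℝ, 0 ≤ θ → ENNReal.ofReal (κ θ) ≤ Λ θ)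
    (hκβ : ∀ θ x : ℝ, 0 ≤ θ → 0 ≤ x → κ (θ + x) ≤ κ θ + β * x) :
    ∀ θ : ℝ, 0 ≤ θ → ENNReal.ofReal (κ θ) ≤ psiFun γ β Λ θ := by
  intro θ hθ
  refine le_min ?_ ?_
  · apply ENNReal.ofReal_le_ofReal
    have h := hκβ 0 θ le_rfl hθ
    rw [zero_add] at h
    linarith
  · refine le_iInf₂ fun t ht => le_iInf₂ fun s hs => ?_
    obtain ⟨ht0, ht1⟩ := ht
    obtain ⟨hs0, hsθ⟩ := hs
    set u := (θ - s) / (1 - t) with hu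
    have h1t : 0 < 1 - t := by linarith
    have hu0 : 0 ≤ u := div_nonneg (by linarith) h1t.le
    have hcomb : θ - s = t * 0 + (1 - t) * u := by
      rw [hu]; field_simp [h1t.ne']; ring
    have hconv := hκconv.2 (self_mem_Ici) (mem_Ici.2 hu0) ht0 h1t.le (by ring)
    simp only [smul_eq_mul] at hconv
    have hθs : κ θ ≤ κ (θ - s) + β * s := by
      have h := hκβ (θ - s) s (by linarith) hs0
      simpa using h
    have hκθs : κ (θ - s) ≤ t * γ + (1 - t) * κ u := by
      calc κ (θ - s) = κ (t * 0 + (1 - t) * u) := by rw [← hcomb]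
        _ ≤ t * κ 0 + (1 - t) * κ u := hconv
        _ ≤ t * γ + (1 - t) * κ u := by nlinarith
    calc ENNReal.ofReal (κ θ)
        ≤ ENNReal.ofReal (t * γ + β * s + (1 - t) * κ u) := by
          apply ENNReal.ofReal_le_ofReal; linarith
      _ ≤ ENNReal.ofReal (t * γ + β * s) + ENNReal.ofReal ((1 - t) * κ u) :=
          ENNReal.ofReal_add_le
      _ = ENNReal.ofReal (t * γ + β * s) + ENNReal.ofReal (1 - t) * ENNReal.ofReal (κ u) := by
          rw [ENNReal.ofReal_mul h1t.le]
      _ ≤ ENNReal.ofReal (t * γ + β * s) + ENNReal.ofReal (1 - t) * Λ u :=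
          add_le_add_right (mul_le_mul_right (hκΛ u hu0) _) _
end
end

section
/- Let β>1 and d>0. For every μ with 0<μ<min(β−1,1) there exists a constant c=c(β,d,μ)<∞ such that, for every probability distribution (p_k) on ℕ satisfying the tail condition H(β,d), h_μ(s) ≤ c for every s∈[0,1). If β>2, the same conclusion also holds for μ=1. -/
open Set Filter

noncomputable section

/-- Probability generating function of a distribution `a` on ℕ. -/
def pgf (a : ℕ → ℝ) (s : ℝ) : ℝ := ∑' k : ℕ, a k * s ^ k

/-- `h_μ(s) = (1-f(s))^{-μ} - (m(1-s))^{-μ}`. -/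
def hmu (μ : ℝ) (a : ℕ → ℝ) (s : ℝ) : ℝ :=
  (1 - pgf a s) ^ (-μ) - (pmfMean a * (1 - s)) ^ (-μ)

-- Bernoulli-type bound
lemma auxBern {A B μ : ℝ} (hA : 0 < A) (hAB : A ≤ B) (hμ0 : 0 ≤ μ) (hμ1 : μ ≤ 1) :
    A ^ (-μ) - B ^ (-μ) ≤ μ * (B - A) / (A * B ^ μ) := by
  have hB : 0 < B := hA.trans_le hAB
  set t := B / A with ht
  have ht1 : 1 ≤ t := (one_le_div hA).2 hAB
  have ht0 : 0 < t := lt_of_lt_of_le one_pos ht1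
  have hAt : A * t = B := by rw [ht]; field_simp
  have key : t ^ μ ≤ 1 + μ * (t - 1) := by
    have h := rpow_one_add_le_one_add_mul_self (s := t - 1) (by linarith) hμ0 hμ1
    rwa [add_sub_cancel] at h
  have hBneg : B ^ (-μ) = A ^ (-μ) * t ^ (-μ) := by
    rw [← hAt, Real.mul_rpow hA.le ht0.le]
  have htt : t ^ μ * t ^ (-μ) = 1 := by
    rw [← Real.rpow_add ht0]; simp
  have hArel : A ^ (-μ) = t ^ μ * B ^ (-μ) := by
    rw [hBneg]
    calc A ^ (-μ) = A ^ (-μ) * (t ^ μ * t ^ (-μ)) := by rw [htt, mul_one]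
      _ = t ^ μ * (A ^ (-μ) * t ^ (-μ)) := by ring
  have hBμpos : 0 < B ^ (-μ) := Real.rpow_pos_of_pos hB _
  have expand : (t ^ μ - 1) * B ^ (-μ) = t ^ μ * B ^ (-μ) - B ^ (-μ) := by ring
  have step : A ^ (-μ) - B ^ (-μ) ≤ (μ * (t - 1)) * B ^ (-μ) := by
    have h2 : (t ^ μ - 1) * B ^ (-μ) ≤ (μ * (t - 1)) * B ^ (-μ) :=
      mul_le_mul_of_nonneg_right (by linarith) hBμpos.le
    rw [hArel]; linarith [expand]
  have hfin : (μ * (t - 1)) * B ^ (-μ) = μ * (B - A) / (A * B ^ μ) := by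
    rw [Real.rpow_neg hB.le, ht]
    have hBμ : (B : ℝ) ^ μ ≠ 0 := (Real.rpow_pos_of_pos hB μ).ne'
    field_simp
  linarith [step, hfin.le]

lemma auxLin {s : ℝ} (hs0 : 0 ≤ s) (hs1 : s ≤ 1) (j : ℕ) : 1 - s ^ j ≤ (j : ℝ) * (1 - s) := by
  induction j with
  | zero => simp
  | succ n ih =>
    have hsn : 0 ≤ s ^ n := pow_nonneg hs0 n
    have hsn1 : s ^ n ≤ 1 := pow_le_one₀ hs0 hs1
    have h : 1 - s ^ (n + 1) = (1 - s) + s * (1 - s ^ n) := by ring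
    have h2 : s * (1 - s ^ n) ≤ 1 - s ^ n := by nlinarith
    push_cast
    nlinarith

-- 1 - s^j ≤ (j(1-s))^μ
lemma auxPow {s μ : ℝ} (hs0 : 0 ≤ s) (hs1 : s < 1) (hμ0 : 0 < μ) (hμ1 : μ ≤ 1) (j : ℕ)
    (hj : 1 ≤ j) : 1 - s ^ j ≤ ((j : ℝ) * (1 - s)) ^ μ := by
  set x := (j : ℝ) * (1 - s) with hx
  have hjpos : (0 : ℝ) < j := by exact_mod_cast hj
  have hx0 : 0 < x := mul_pos hjpos (by linarith)
  have hle1 : 1 - s ^ j ≤ 1 := by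
    have := pow_nonneg hs0 j; linarith
  have hlex : 1 - s ^ j ≤ x := auxLin hs0 hs1.le j
  rcases le_or_gt x 1 with h | h
  · calc 1 - s ^ j ≤ x := hlex
      _ = x ^ (1 : ℝ) := (Real.rpow_one x).symm
      _ ≤ x ^ μ := Real.rpow_le_rpow_of_exponent_ge hx0 h hμ1
  · calc 1 - s ^ j ≤ 1 := hle1
      _ = (1 : ℝ) ^ μ := (Real.one_rpow μ).symm
      _ ≤ x ^ μ := Real.rpow_le_rpow zero_le_one h.le hμ0.le

lemma hmu_le_main (β d μ : ℝ) (hd : 0 < d) (hμ0 : 0 < μ) (hμ1 : μ ≤ 1) (hμβ : μ + 1 < β) :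
    ∃ c : ℝ, 0 < c ∧ ∀ a : ℕ → ℝ, IsOffspring a → 0 < tailAt a 0 → TailCond β d a →
      ∀ s ∈ Ico (0 : ℝ) 1, hmu μ a s ≤ c := by
  have hZsum : Summable (fun j : ℕ => (j : ℝ) ^ (μ - β)) :=
    Real.summable_nat_rpow.2 (by linarith)
  set Z := ∑' j : ℕ, (j : ℝ) ^ (μ - β) with hZdef
  have hZpos : 0 < Z := by
    refine Summable.tsum_pos hZsum (fun j => Real.rpow_nonneg (Nat.cast_nonneg j) _) 1 ?_
    norm_num
  refine ⟨d * Z, mul_pos hd hZpos, ?_⟩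
  rintro a ⟨hpos, hsum1, hksum, hmpos⟩ hq0 hH s ⟨hs0, hs1⟩
  set m := pmfMean a with hmdef
  have hs1' : (0:ℝ) < 1 - s := by linarith
  have hsa : Summable a := hsum1.summable
  have hspow0 : ∀ k : ℕ, 0 ≤ s ^ k := fun k => pow_nonneg hs0 k
  have hspow1 : ∀ k : ℕ, s ^ k ≤ 1 := fun k => pow_le_one₀ hs0 hs1.le
  have hsa2 : Summable (fun k : ℕ => a k * s ^ k) := by
    refine Summable.of_nonneg_of_le (fun k => mul_nonneg (hpos k) (hspow0 k)) (fun k => ?_) hsa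
    exact mul_le_of_le_one_right (hpos k) (hspow1 k)
  have hsa3 : Summable (fun k : ℕ => a k * (1 - s ^ k)) := by
    refine Summable.of_nonneg_of_le
      (fun k => mul_nonneg (hpos k) (by linarith [hspow1 k])) (fun k => ?_) hsa
    have := hspow0 k
    nlinarith [hpos k]
  -- tails
  have htailsumm : ∀ n : ℕ, Summable (fun j : ℕ => if n < j then a j else 0) := by
    intro n
    refine Summable.of_nonneg_of_le (fun j => ?_) (fun j => ?_) hsa
    · split <;> simp [hpos _]
    · split <;> simp [hpos _]
  have htailnn : ∀ n : ℕ, 0 ≤ tailAt a n := by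
    intro n; refine tsum_nonneg fun j => ?_; split <;> simp [hpos _]
  -- A = ∑ a k (1 - s^k)
  have hfA : 1 - pgf a s = ∑' k : ℕ, a k * (1 - s ^ k) := by
    have h := Summable.tsum_sub hsa hsa2
    rw [hsum1.tsum_eq] at h
    rw [pgf, ← h]
    exact tsum_congr fun k => by ring
  -- lower bound on A
  have hAlow : tailAt a 0 * (1 - s) ≤ 1 - pgf a s := by
    rw [hfA, tailAt, ← tsum_mul_right]
    refine Summable.tsum_le_tsum (fun k => ?_) ((htailsumm 0).mul_right _) hsa3
    match k with
    | 0 => simp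
    | (n+1) =>
      have hlt : 0 < n + 1 := Nat.succ_pos n
      simp only [if_pos hlt]
      have hsk : s ^ (n+1) ≤ s := by
        calc s ^ (n+1) ≤ s ^ 1 := pow_le_pow_of_le_one hs0 hs1.le (by omega)
          _ = s := pow_one s
      have := hpos (n+1)
      nlinarith
  have hA0 : 0 < 1 - pgf a s := lt_of_lt_of_le (mul_pos hq0 hs1') hAlow
  -- G and the identity
  set G : ℕ → ℝ := fun k => ∑ j ∈ Finset.range k, (1 - s ^ j) with hGdef
  have hGid : ∀ k : ℕ, (1 - s) * G k = (k : ℝ) * (1 - s) - (1 - s ^ k) := by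
    intro k
    have hg := geom_sum_mul s k
    have hGk : G k = (k : ℝ) - ∑ j ∈ Finset.range k, s ^ j := by
      simp only [hGdef, Finset.sum_sub_distrib, Finset.sum_const, Finset.card_range,
        nsmul_eq_mul, mul_one]
    rw [hGk]
    linear_combination hg
  have hG0 : ∀ k, 0 ≤ G k := by
    intro k; refine Finset.sum_nonneg fun j _ => ?_; linarith [hspow1 j]
  have hGk : ∀ k : ℕ, G k ≤ (k : ℝ) := by
    intro k
    calc G k = ∑ j ∈ Finset.range k, (1 - s ^ j) := rfl
      _ ≤ ∑ _j ∈ Finset.range k, (1:ℝ) :=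
        Finset.sum_le_sum fun j _ => by linarith [hspow0 j]
      _ = (k : ℝ) := by simp
  have hsaG : Summable (fun k : ℕ => a k * G k) := by
    refine Summable.of_nonneg_of_le (fun k => mul_nonneg (hpos k) (hG0 k)) (fun k => ?_) hksum
    calc a k * G k ≤ a k * (k:ℝ) := mul_le_mul_of_nonneg_left (hGk k) (hpos k)
      _ = (k:ℝ) * a k := by ring
  -- D = m(1-s) - A
  have hBsum : m * (1 - s) = ∑' k : ℕ, (k : ℝ) * a k * (1 - s) := by
    rw [hmdef, pmfMean, tsum_mul_right]
  have hD : m * (1 - s) - (1 - pgf a s) = (1 - s) * ∑' k : ℕ, a k * G k := by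
    rw [hBsum, hfA, ← Summable.tsum_sub (hksum.mul_right (1 - s)) hsa3, ← tsum_mul_left]
    exact tsum_congr fun k => by linear_combination (-(a k)) * hGid k
  -- Fubini
  set F : ℕ × ℕ → ℝ := fun p => if p.2 < p.1 then a p.1 * (1 - s ^ p.2) else 0 with hFdef
  have hFnn : 0 ≤ F := by
    intro p
    simp only [hFdef]
    split
    · exact mul_nonneg (hpos _) (by linarith [hspow1 p.2])
    · exact le_refl 0
  have hFvanish : ∀ k : ℕ, ∀ j ∉ Finset.range k, F (k, j) = 0 := by
    intro k j hj
    simp only [hFdef]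
    rw [if_neg]
    simpa using Finset.mem_range.not.1 hj
  have hFinnersum : ∀ k : ℕ, Summable (fun j => F (k, j)) :=
    fun k => summable_of_ne_finset_zero (hFvanish k)
  have hFinner : ∀ k : ℕ, ∑' j : ℕ, F (k, j) = a k * G k := by
    intro k
    rw [tsum_eq_sum (hFvanish k), hGdef, Finset.mul_sum]
    refine Finset.sum_congr rfl fun j hj => ?_
    simp [hFdef, Finset.mem_range.1 hj]
  have hFsum : Summable F := by
    refine (summable_prod_of_nonneg hFnn).2 ⟨hFinnersum, ?_⟩
    simpa only [hFinner] using hsaG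
  have hswap : ∑' k : ℕ, ∑' j : ℕ, F (k, j) = ∑' j : ℕ, ∑' k : ℕ, F (k, j) :=
    (Summable.tsum_comm (f := fun k j => F (k, j)) (by exact hFsum)).symm
  have hcol : ∀ j : ℕ, ∑' k : ℕ, F (k, j) = (1 - s ^ j) * tailAt a j := by
    intro j
    rw [tailAt, ← tsum_mul_left]
    congr 1; funext k
    by_cases h : j < k <;> simp [hFdef, h, mul_comm]
  -- tail sum bound
  set C0 := d * tailAt a 0 * min m 1 with hC0def
  have hC0nn : 0 ≤ C0 := by
    have : 0 < min m 1 := lt_min hmpos one_pos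
    positivity
  have hterm : ∀ j : ℕ,
      (1 - s ^ j) * tailAt a j ≤ (1 - s) ^ μ * C0 * (j : ℝ) ^ (μ - β) := by
    intro j
    match j with
    | 0 =>
      simp [Real.zero_rpow (show μ - β ≠ 0 by intro h; rw [sub_eq_zero] at h; linarith)]
    | (n+1) =>
      have hj1 : 1 ≤ n + 1 := Nat.succ_le_succ (Nat.zero_le n)
      have hjpos : (0:ℝ) < ((n+1 : ℕ) : ℝ) := by exact_mod_cast Nat.succ_pos n
      have h1 : 1 - s ^ (n+1) ≤ ((n+1 : ℕ) : ℝ) ^ μ * (1 - s) ^ μ := by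
        have := auxPow hs0 hs1 hμ0 hμ1 (n+1) hj1
        rwa [Real.mul_rpow hjpos.le hs1'.le] at this
      have h2 : tailAt a (n+1) ≤ C0 * ((n+1 : ℕ) : ℝ) ^ (-β) := hH (n+1) hj1
      have h3 : (1 - s ^ (n+1)) * tailAt a (n+1) ≤
          (((n+1 : ℕ) : ℝ) ^ μ * (1 - s) ^ μ) * (C0 * ((n+1 : ℕ) : ℝ) ^ (-β)) := by
        refine mul_le_mul h1 h2 (htailnn _) ?_
        positivity
      calc (1 - s ^ (n+1)) * tailAt a (n+1)
          ≤ (((n+1 : ℕ) : ℝ) ^ μ * (1 - s) ^ μ) * (C0 * ((n+1 : ℕ) : ℝ) ^ (-β)) := h3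
        _ = (1 - s) ^ μ * C0 * (((n+1 : ℕ) : ℝ) ^ μ * ((n+1 : ℕ) : ℝ) ^ (-β)) := by ring
        _ = (1 - s) ^ μ * C0 * ((n+1 : ℕ) : ℝ) ^ (μ - β) := by
            rw [← Real.rpow_add hjpos]; ring_nf
  have hRHSsum : Summable (fun j : ℕ => (1 - s) ^ μ * C0 * (j : ℝ) ^ (μ - β)) := by
    simpa only [mul_assoc] using (hZsum.mul_left ((1 - s) ^ μ * C0))
  have hLHSsum : Summable (fun j : ℕ => (1 - s ^ j) * tailAt a j) := by
    refine Summable.of_nonneg_of_le (fun j => mul_nonneg (by linarith [hspow1 j]) (htailnn j))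
      hterm hRHSsum
  have hT : ∑' j : ℕ, (1 - s ^ j) * tailAt a j ≤ (1 - s) ^ μ * C0 * Z := by
    calc ∑' j : ℕ, (1 - s ^ j) * tailAt a j
        ≤ ∑' j : ℕ, (1 - s) ^ μ * C0 * (j : ℝ) ^ (μ - β) :=
          Summable.tsum_le_tsum hterm hLHSsum hRHSsum
      _ = (1 - s) ^ μ * C0 * Z := by rw [hZdef, ← tsum_mul_left]
  -- combine: D ≤ (1-s) * ((1-s)^μ * C0 * Z)
  have hDeq : m * (1 - s) - (1 - pgf a s) = (1 - s) * ∑' j : ℕ, (1 - s ^ j) * tailAt a j := by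
    rw [hD]
    congr 1
    calc ∑' k : ℕ, a k * G k = ∑' k : ℕ, ∑' j : ℕ, F (k, j) := by
          simp only [hFinner]
      _ = ∑' j : ℕ, ∑' k : ℕ, F (k, j) := hswap
      _ = ∑' j : ℕ, (1 - s ^ j) * tailAt a j := by simp only [hcol]
  have hDbound : m * (1 - s) - (1 - pgf a s) ≤ (1 - s) * ((1 - s) ^ μ * C0 * Z) := by
    rw [hDeq]
    exact mul_le_mul_of_nonneg_left hT hs1'.le
  have hDnn : 0 ≤ m * (1 - s) - (1 - pgf a s) := by
    rw [hDeq]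
    refine mul_nonneg hs1'.le (tsum_nonneg fun j => mul_nonneg (by linarith [hspow1 j]) (htailnn j))
  have hAB : 1 - pgf a s ≤ m * (1 - s) := by linarith
  have hB0 : 0 < m * (1 - s) := mul_pos hmpos hs1'
  -- Bernoulli
  have hbern := auxBern hA0 hAB hμ0.le hμ1
  have hBmu : (m * (1 - s)) ^ μ = m ^ μ * (1 - s) ^ μ := Real.mul_rpow hmpos.le hs1'.le
  have hdenlow : (tailAt a 0 * (1 - s)) * (m ^ μ * (1 - s) ^ μ) ≤
      (1 - pgf a s) * (m * (1 - s)) ^ μ := by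
    rw [hBmu]
    refine mul_le_mul_of_nonneg_right hAlow ?_
    positivity
  have hdenpos : 0 < (tailAt a 0 * (1 - s)) * (m ^ μ * (1 - s) ^ μ) := by positivity
  have hnum_nn : 0 ≤ μ * (m * (1 - s) - (1 - pgf a s)) := mul_nonneg hμ0.le hDnn
  have step1 : hmu μ a s ≤ μ * (m * (1 - s) - (1 - pgf a s)) /
      ((tailAt a 0 * (1 - s)) * (m ^ μ * (1 - s) ^ μ)) := by
    refine le_trans hbern ?_
    exact div_le_div_of_nonneg_left hnum_nn hdenpos hdenlow
  have step2 : μ * (m * (1 - s) - (1 - pgf a s)) /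
      ((tailAt a 0 * (1 - s)) * (m ^ μ * (1 - s) ^ μ)) ≤
      μ * ((1 - s) * ((1 - s) ^ μ * C0 * Z)) /
      ((tailAt a 0 * (1 - s)) * (m ^ μ * (1 - s) ^ μ)) := by
    refine div_le_div_of_nonneg_right ?_ hdenpos.le
    exact mul_le_mul_of_nonneg_left hDbound hμ0.le
  have hstep3 : μ * ((1 - s) * ((1 - s) ^ μ * C0 * Z)) /
      ((tailAt a 0 * (1 - s)) * (m ^ μ * (1 - s) ^ μ)) =
      μ * C0 * Z / (tailAt a 0 * m ^ μ) := by
    have h1 : (1 - s : ℝ) ≠ 0 := hs1'.ne'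
    have h2 : ((1 - s : ℝ)) ^ μ ≠ 0 := (Real.rpow_pos_of_pos hs1' μ).ne'
    have h3 : tailAt a 0 ≠ 0 := hq0.ne'
    have h4 : m ^ μ ≠ 0 := (Real.rpow_pos_of_pos hmpos μ).ne'
    field_simp
  have hminle : min m 1 ≤ m ^ μ := by
    rcases le_total m 1 with h | h
    · rw [min_eq_left h]
      calc m = m ^ (1:ℝ) := (Real.rpow_one m).symm
        _ ≤ m ^ μ := Real.rpow_le_rpow_of_exponent_ge hmpos h hμ1
    · rw [min_eq_right h]
      calc (1:ℝ) = (1:ℝ) ^ μ := (Real.one_rpow μ).symm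
        _ ≤ m ^ μ := Real.rpow_le_rpow zero_le_one h hμ0.le
  have hfinal : μ * C0 * Z / (tailAt a 0 * m ^ μ) ≤ d * Z := by
    rw [hC0def, div_le_iff₀ (by positivity)]
    have hmμpos : 0 < m ^ μ := Real.rpow_pos_of_pos hmpos μ
    have key : μ * (d * tailAt a 0 * min m 1) * Z ≤ 1 * (d * tailAt a 0 * m ^ μ) * Z := by
      refine mul_le_mul_of_nonneg_right ?_ hZpos.le
      refine mul_le_mul hμ1 ?_ (by positivity) zero_le_one
      exact mul_le_mul_of_nonneg_left hminle (by positivity)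
    calc μ * (d * tailAt a 0 * min m 1) * Z ≤ 1 * (d * tailAt a 0 * m ^ μ) * Z := key
      _ = d * Z * (tailAt a 0 * m ^ μ) := by ring
  calc hmu μ a s ≤ _ := step1
    _ ≤ _ := step2
    _ = μ * C0 * Z / (tailAt a 0 * m ^ μ) := hstep3
    _ ≤ d * Z := hfinal

/-- for `β > 1`, `d > 0` and `0 < μ < min(β-1,1)` there is a constant
`c = c(β,d,μ) < ∞` with `h_μ(s) ≤ c` on `[0,1)` for every distribution satisfying `H(β,d)`;
for `β > 2` the same holds for `μ = 1`. -/
theorem hmu_bounded (β d : ℝ) (hβ : 1 < β) (hd : 0 < d) :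
    (∀ μ : ℝ, 0 < μ → μ < min (β - 1) 1 →
      ∃ c : ℝ, 0 < c ∧ ∀ a : ℕ → ℝ, IsOffspring a → 0 < tailAt a 0 → TailCond β d a →
        ∀ s ∈ Ico (0 : ℝ) 1, hmu μ a s ≤ c) ∧
    (2 < β →
      ∃ c : ℝ, 0 < c ∧ ∀ a : ℕ → ℝ, IsOffspring a → 0 < tailAt a 0 → TailCond β d a →
        ∀ s ∈ Ico (0 : ℝ) 1, hmu 1 a s ≤ c) := by
  constructor
  · intro μ hμ0 hμlt
    have h1 : μ < β - 1 := lt_of_lt_of_le hμlt (min_le_left _ _)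
    have h2 : μ < 1 := lt_of_lt_of_le hμlt (min_le_right _ _)
    exact hmu_le_main β d μ hd hμ0 h2.le (by linarith)
  · intro hβ2
    exact hmu_le_main β d 1 hd one_pos le_rfl (by linarith)
end
end
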